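/- arXiv:1209.4979 — 4 statements merged into one kernel-verified Lean document; each statement's English description precedes it below -/
import Mathlib

section
/- In the (D_n, C_1) lattice, for each index i with 1 ≤ i ≤ n: exactly 2 elements a of I satisfy ⟨l(a), C_i⟩ = 1, exactly 2 satisfy ⟨l(a), C_i⟩ = −1, and exactly 2n − 4 satisfy ⟨l(a), C_i⟩ = 0. -/
/-- The Gram matrix of the `(Dₙ, C_k)` lattice: basis `C₀, C₁, …, Cₙ` (index `i : Fin (n+1)`
corresponds to `Cᵢ`), with `⟨C₀,C₀⟩ = -1`, `⟨Cᵢ,Cᵢ⟩ = -2` for `1 ≤ i ≤ n`,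
`⟨Cᵢ,Cᵢ₊₁⟩ = 1` for `1 ≤ i ≤ n-2`, `⟨C_{n-2},Cₙ⟩ = 1`, `⟨C₀,C_k⟩ = 1`, and all other
off-diagonal entries `0`. -/
def gramD (n k : ℕ) (i j : Fin (n + 1)) : ℤ :=
  if i = j then (if (i : ℕ) = 0 then -1 else -2)
  else if (1 ≤ (i : ℕ) ∧ (j : ℕ) = (i : ℕ) + 1 ∧ (j : ℕ) < n)
      ∨ (1 ≤ (j : ℕ) ∧ (i : ℕ) = (j : ℕ) + 1 ∧ (i : ℕ) < n)
      ∨ ((i : ℕ) = n - 2 ∧ (j : ℕ) = n) ∨ ((j : ℕ) = n - 2 ∧ (i : ℕ) = n)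
      ∨ ((i : ℕ) = 0 ∧ (j : ℕ) = k) ∨ ((j : ℕ) = 0 ∧ (i : ℕ) = k) then 1
  else 0

/-- The symmetric bilinear form associated to a Gram matrix, on coordinate vectors. -/
def qform {m : ℕ} (g : Fin m → Fin m → ℤ) (x y : Fin m → ℤ) : ℤ :=
  ∑ i, ∑ j, x i * g i j * y j

/-- The class `l(a) = C₀ + ∑ aᵢ Cᵢ`, as a coordinate vector. -/
def lD (n : ℕ) (a : Fin n → ℤ) : Fin (n + 1) → ℤ := Fin.cons 1 a

/-- The set `I` of coefficient tuples `a ∈ ℤⁿ` with all `aᵢ ≥ 0` and `⟨l(a), l(a)⟩ = -1`. -/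
def ID (n k : ℕ) : Set (Fin n → ℤ) :=
  {a | (∀ i, 0 ≤ a i) ∧ qform (gramD n k) (lD n a) (lD n a) = -1}

def dnExt (n : ℕ) (a : Fin n → ℤ) (j : ℕ) : ℤ := if h : j < n then a ⟨j, h⟩ else 0

def dnX (n : ℕ) (a : Fin n → ℤ) (p : ℕ) : ℤ := if p = 0 then 1 else dnExt n a (p - 1)

def dnG (n k : ℕ) (i j : ℕ) : ℤ :=
  if i = j then (if i = 0 then -1 else -2)
  else if (1 ≤ i ∧ j = i + 1 ∧ j < n) ∨ (1 ≤ j ∧ i = j + 1 ∧ i < n)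
      ∨ (i = n - 2 ∧ j = n) ∨ (j = n - 2 ∧ i = n)
      ∨ (i = 0 ∧ j = k) ∨ (j = 0 ∧ i = k) then 1
  else 0

lemma dnG_eq (n k : ℕ) (i j : Fin (n+1)) : gramD n k i j = dnG n k (i : ℕ) (j : ℕ) := by
  unfold gramD dnG
  simp only [Fin.val_inj]

lemma dnX_eq (n : ℕ) (a : Fin n → ℤ) (p : Fin (n+1)) : lD n a p = dnX n a (p : ℕ) := by
  induction p using Fin.cases with
  | zero => simp [lD, dnX]
  | succ q => simp [lD, dnX, dnExt]

lemma dnGrow (n : ℕ) (hn : 4 ≤ n) (p q : ℕ) : dnG n 1 p q =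
    (if p = 0 ∧ q = 0 then -1 else 0)
  + (if 1 ≤ p ∧ q = p then -2 else 0)
  + (if (1 ≤ p ∧ p + 1 < n) ∧ q = p + 1 then 1 else 0)
  + (if (2 ≤ p ∧ p < n) ∧ q = p - 1 then 1 else 0)
  + (if p = n - 2 ∧ q = n then 1 else 0)
  + (if p = n ∧ q = n - 2 then 1 else 0)
  + (if p = 0 ∧ q = 1 then 1 else 0)
  + (if p = 1 ∧ q = 0 then 1 else 0) := by
  unfold dnG
  rcases eq_or_ne p q with rfl | hd
  · rw [if_pos rfl]
    rcases eq_or_ne p 0 with rfl | h0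
    · rw [if_pos rfl, if_pos (by omega), if_neg (by omega), if_neg (by omega),
        if_neg (by omega), if_neg (by omega), if_neg (by omega), if_neg (by omega),
        if_neg (by omega)]
      norm_num
    · rw [if_neg h0, if_neg (by omega), if_pos (by omega), if_neg (by omega),
        if_neg (by omega), if_neg (by omega), if_neg (by omega), if_neg (by omega),
        if_neg (by omega)]
      norm_num
  · rw [if_neg hd]
    by_cases hb : (1 ≤ p ∧ q = p + 1 ∧ q < n) ∨ (1 ≤ q ∧ p = q + 1 ∧ p < n)
      ∨ (p = n - 2 ∧ q = n) ∨ (q = n - 2 ∧ p = n)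
      ∨ (p = 0 ∧ q = 1) ∨ (q = 0 ∧ p = 1)
    · rw [if_pos hb]
      rcases hb with h | h | h | h | h | h
      · rw [if_neg (by omega), if_neg (by omega), if_pos (by omega), if_neg (by omega),
          if_neg (by omega), if_neg (by omega), if_neg (by omega), if_neg (by omega)]
        norm_num
      · rw [if_neg (by omega), if_neg (by omega), if_neg (by omega), if_pos (by omega),
          if_neg (by omega), if_neg (by omega), if_neg (by omega), if_neg (by omega)]
        norm_num
      · rw [if_neg (by omega), if_neg (by omega), if_neg (by omega), if_neg (by omega),
          if_pos (by omega), if_neg (by omega), if_neg (by omega), if_neg (by omega)]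
        norm_num
      · rw [if_neg (by omega), if_neg (by omega), if_neg (by omega), if_neg (by omega),
          if_neg (by omega), if_pos (by omega), if_neg (by omega), if_neg (by omega)]
        norm_num
      · rw [if_neg (by omega), if_neg (by omega), if_neg (by omega), if_neg (by omega),
          if_neg (by omega), if_neg (by omega), if_pos (by omega), if_neg (by omega)]
        norm_num
      · rw [if_neg (by omega), if_neg (by omega), if_neg (by omega), if_neg (by omega),
          if_neg (by omega), if_neg (by omega), if_neg (by omega), if_pos (by omega)]
        norm_num
    · rw [if_neg hb, if_neg (by omega), if_neg (by omega), if_neg (by omega),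
        if_neg (by omega), if_neg (by omega), if_neg (by omega), if_neg (by omega),
        if_neg (by omega)]
      norm_num

lemma dn_sum_ite {m : ℕ} (C : Prop) [Decidable C] (t : ℕ) (f : ℕ → ℤ) (ht : C → t < m) :
    ∑ q ∈ Finset.range m, (if C ∧ q = t then f q else 0) = if C then f t else 0 := by
  by_cases h : C
  · simp only [h, true_and, if_true]
    rw [Finset.sum_ite_eq' (Finset.range m) t f, if_pos (Finset.mem_range.mpr (ht h))]
  · simp [h]

lemma dn_sum_delta {m : ℕ} (t : ℕ) (f : ℕ → ℤ) (ht : t < m) :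
    ∑ q ∈ Finset.range m, (if q = t then f q else 0) = f t := by
  rw [Finset.sum_ite_eq' (Finset.range m) t f, if_pos (Finset.mem_range.mpr ht)]

lemma dn_sum_shift (m : ℕ) (f : ℕ → ℤ) :
    ∑ p ∈ Finset.range (m + 1), (if 1 ≤ p then f p else 0) = ∑ j ∈ Finset.range m, f (j + 1) := by
  rw [Finset.sum_range_succ']
  simp

lemma dn_sum_band (m l r : ℕ) (f : ℕ → ℤ) (hr : r ≤ m) :
    ∑ p ∈ Finset.range m, (if l ≤ p ∧ p < r then f p else 0)
      = ∑ j ∈ Finset.range (r - l), f (l + j) := by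
  have h1 : ∀ p, (l ≤ p ∧ p < r) ↔ p ∈ Finset.Ico l r := by
    intro p; simp [Finset.mem_Ico]
  simp only [h1]
  rw [Finset.sum_ite_mem, Finset.inter_eq_right.mpr, Finset.sum_Ico_eq_sum_range]
  intro x hx
  simp only [Finset.mem_Ico] at hx
  simp only [Finset.mem_range]
  omega

lemma dn_qform_range (n : ℕ) (a : Fin n → ℤ) (y : Fin (n+1) → ℤ) (Y : ℕ → ℤ)
    (hy : ∀ q : Fin (n+1), y q = Y (q : ℕ)) :
    qform (gramD n 1) (lD n a) y
      = ∑ p ∈ Finset.range (n+1), ∑ q ∈ Finset.range (n+1), dnX n a p * dnG n 1 p q * Y q := by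
  unfold qform
  rw [← Fin.sum_univ_eq_sum_range
    (fun p => ∑ q ∈ Finset.range (n+1), dnX n a p * dnG n 1 p q * Y q) (n+1)]
  refine Finset.sum_congr rfl fun p _ => ?_
  rw [← Fin.sum_univ_eq_sum_range (fun q => dnX n a (p : ℕ) * dnG n 1 (p : ℕ) q * Y q) (n+1)]
  refine Finset.sum_congr rfl fun q _ => ?_
  rw [dnG_eq, dnX_eq, hy]

lemma dnX_zero (n : ℕ) (a : Fin n → ℤ) : dnX n a 0 = 1 := rfl

lemma dnX_succ (n : ℕ) (a : Fin n → ℤ) (p : ℕ) : dnX n a (p + 1) = dnExt n a p := by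
  simp [dnX]

lemma dnX_pos (n : ℕ) (a : Fin n → ℤ) (p : ℕ) (hp : 1 ≤ p) : dnX n a p = dnExt n a (p - 1) := by
  unfold dnX
  rw [if_neg (by omega)]

lemma dn_inner (m : ℕ) (C : ℕ → Prop) [DecidablePred C] (t : ℕ → ℕ) (f : ℕ → ℕ → ℤ)
    (ht : ∀ p, p < m → C p → t p < m) :
    (∑ p ∈ Finset.range m, ∑ q ∈ Finset.range m, if C p ∧ q = t p then f p q else 0)
      = ∑ p ∈ Finset.range m, if C p then f p (t p) else 0 :=
  Finset.sum_congr rfl fun p hp =>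
    dn_sum_ite (m := m) (C p) (t p) (f p) (ht p (Finset.mem_range.mp hp))

lemma dn_qll (n : ℕ) (hn : 4 ≤ n) (a : Fin n → ℤ) :
    qform (gramD n 1) (lD n a) (lD n a)
      = -1 + 2 * dnExt n a 0
        - 2 * ∑ j ∈ Finset.range n, (dnExt n a j) ^ 2
        + 2 * ∑ j ∈ Finset.range (n - 2), dnExt n a j * dnExt n a (j + 1)
        + 2 * (dnExt n a (n - 3) * dnExt n a (n - 1)) := by
  rw [dn_qform_range n a (lD n a) (dnX n a) (dnX_eq n a)]
  have hpt : ∀ p q : ℕ, dnX n a p * dnG n 1 p q * dnX n a q =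
      (if p = 0 ∧ q = 0 then -(dnX n a p * dnX n a q) else 0)
    + (if 1 ≤ p ∧ q = p then -(dnX n a p * 2 * dnX n a q) else 0)
    + (if (1 ≤ p ∧ p + 1 < n) ∧ q = p + 1 then dnX n a p * dnX n a q else 0)
    + (if (2 ≤ p ∧ p < n) ∧ q = p - 1 then dnX n a p * dnX n a q else 0)
    + (if p = n - 2 ∧ q = n then dnX n a p * dnX n a q else 0)
    + (if p = n ∧ q = n - 2 then dnX n a p * dnX n a q else 0)
    + (if p = 0 ∧ q = 1 then dnX n a p * dnX n a q else 0)
    + (if p = 1 ∧ q = 0 then dnX n a p * dnX n a q else 0) := by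
    intro p q
    rw [dnGrow n hn p q]
    simp only [mul_add, add_mul, mul_ite, ite_mul, mul_zero, zero_mul, mul_one, mul_neg, neg_mul,
      mul_neg_one, one_mul]
  simp only [hpt]
  simp only [Finset.sum_add_distrib]
  rw [dn_inner (n+1) (fun p => p = 0) (fun _ => 0)
      (fun p q => -(dnX n a p * dnX n a q)) (fun p hp hC => by omega)]
  rw [dn_inner (n+1) (fun p => 1 ≤ p) (fun p => p)
      (fun p q => -(dnX n a p * 2 * dnX n a q)) (fun p hp hC => by omega)]
  rw [dn_inner (n+1) (fun p => 1 ≤ p ∧ p + 1 < n) (fun p => p + 1)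
      (fun p q => dnX n a p * dnX n a q) (fun p hp hC => by omega)]
  rw [dn_inner (n+1) (fun p => 2 ≤ p ∧ p < n) (fun p => p - 1)
      (fun p q => dnX n a p * dnX n a q) (fun p hp hC => by omega)]
  rw [dn_inner (n+1) (fun p => p = n - 2) (fun _ => n)
      (fun p q => dnX n a p * dnX n a q) (fun p hp hC => by omega)]
  rw [dn_inner (n+1) (fun p => p = n) (fun _ => n - 2)
      (fun p q => dnX n a p * dnX n a q) (fun p hp hC => by omega)]
  rw [dn_inner (n+1) (fun p => p = 0) (fun _ => 1)
      (fun p q => dnX n a p * dnX n a q) (fun p hp hC => by omega)]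
  rw [dn_inner (n+1) (fun p => p = 1) (fun _ => 0)
      (fun p q => dnX n a p * dnX n a q) (fun p hp hC => by omega)]
  rw [dn_sum_delta (m := n+1) 0 (fun p => -(dnX n a p * dnX n a 0)) (by omega)]
  rw [dn_sum_shift n (fun p => -(dnX n a p * 2 * dnX n a p))]
  simp only [show ∀ p : ℕ, (1 ≤ p ∧ p + 1 < n) ↔ (1 ≤ p ∧ p < n - 1) from fun p => by omega]
  rw [dn_sum_band (n+1) 1 (n-1) (fun p => dnX n a p * dnX n a (p + 1)) (by omega)]
  rw [dn_sum_band (n+1) 2 n (fun p => dnX n a p * dnX n a (p - 1)) (by omega)]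
  rw [dn_sum_delta (m := n+1) (n-2) (fun p => dnX n a p * dnX n a n) (by omega)]
  rw [dn_sum_delta (m := n+1) n (fun p => dnX n a p * dnX n a (n - 2)) (by omega)]
  rw [dn_sum_delta (m := n+1) 0 (fun p => dnX n a p * dnX n a 1) (by omega)]
  rw [dn_sum_delta (m := n+1) 1 (fun p => dnX n a p * dnX n a 0) (by omega)]
  have c2 : ∑ j ∈ Finset.range n, -(dnX n a (j+1) * 2 * dnX n a (j+1))
      = -2 * ∑ j ∈ Finset.range n, dnExt n a j ^ 2 := by
    rw [Finset.mul_sum]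
    refine Finset.sum_congr rfl fun j _ => ?_
    rw [dnX_succ]; ring
  have c3 : ∑ j ∈ Finset.range (n-1-1), dnX n a (1+j) * dnX n a (1+j+1)
      = ∑ j ∈ Finset.range (n-2), dnExt n a j * dnExt n a (j+1) := by
    rw [show n-1-1 = n-2 from by omega]
    refine Finset.sum_congr rfl fun j _ => ?_
    rw [show 1+j = j+1 from by omega, dnX_succ, dnX_succ]
  have c4 : ∑ j ∈ Finset.range (n-2), dnX n a (2+j) * dnX n a (2+j-1)
      = ∑ j ∈ Finset.range (n-2), dnExt n a j * dnExt n a (j+1) := by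
    refine Finset.sum_congr rfl fun j _ => ?_
    rw [show 2+j = (j+1)+1 from by omega, dnX_succ, show (j+1)+1-1 = j+1 from by omega, dnX_succ]
    ring
  have c5 : dnX n a n = dnExt n a (n-1) := dnX_pos n a n (by omega)
  have c6 : dnX n a (n-2) = dnExt n a (n-3) := by
    rw [dnX_pos n a (n-2) (by omega), show n-2-1 = n-3 from by omega]
  have c7 : dnX n a 1 = dnExt n a 0 := dnX_succ n a 0
  rw [c2, c3, c4, c5, c6, c7, dnX_zero]
  ring

def dnC (n : ℕ) (a : Fin n → ℤ) (j : ℕ) : ℤ :=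
  if j = 0 then dnExt n a 0 - 1
  else if j = n - 1 then dnExt n a (n-1) - dnExt n a (n-2)
  else if j = n - 2 then dnExt n a (n-2) + dnExt n a (n-1) - dnExt n a (n-3)
  else dnExt n a j - dnExt n a (j-1)

lemma dnC_zero (n : ℕ) (a : Fin n → ℤ) : dnC n a 0 = dnExt n a 0 - 1 := by
  simp [dnC]

lemma dnC_chain (n : ℕ) (a : Fin n → ℤ) (j : ℕ) (hn : 4 ≤ n) (h1 : 1 ≤ j) (h2 : j ≤ n - 3) :
    dnC n a j = dnExt n a j - dnExt n a (j-1) := by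
  unfold dnC
  rw [if_neg (by omega), if_neg (by omega), if_neg (by omega)]

lemma dnC_nm2 (n : ℕ) (a : Fin n → ℤ) (hn : 4 ≤ n) :
    dnC n a (n-2) = dnExt n a (n-2) + dnExt n a (n-1) - dnExt n a (n-3) := by
  unfold dnC
  rw [if_neg (by omega), if_neg (by omega), if_pos rfl]

lemma dnC_nm1 (n : ℕ) (a : Fin n → ℤ) (hn : 4 ≤ n) :
    dnC n a (n-1) = dnExt n a (n-1) - dnExt n a (n-2) := by
  unfold dnC
  rw [if_neg (by omega), if_pos rfl]

lemma dn_key (n : ℕ) (hn : 4 ≤ n) (a : Fin n → ℤ) :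
    ∑ j ∈ Finset.range n, (dnC n a j)^2 = - qform (gramD n 1) (lD n a) (lD n a) := by
  rw [dn_qll n hn a]
  obtain ⟨m, rfl⟩ : ∃ m, n = m + 4 := ⟨n - 4, by omega⟩
  have e1 : m + 4 - 1 = m + 3 := by omega
  have e2 : m + 4 - 2 = m + 2 := by omega
  have e3 : m + 4 - 3 = m + 1 := by omega
  rw [e1, e2, e3]
  rw [Finset.sum_range_succ (fun j => dnC (m+4) a j ^ 2) (m+3),
      Finset.sum_range_succ (fun j => dnC (m+4) a j ^ 2) (m+2),
      Finset.sum_range_succ' (fun j => dnC (m+4) a j ^ 2) (m+1)]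
  rw [Finset.sum_range_succ (fun j => dnExt (m+4) a j ^ 2) (m+3),
      Finset.sum_range_succ (fun j => dnExt (m+4) a j ^ 2) (m+2),
      Finset.sum_range_succ (fun j => dnExt (m+4) a j ^ 2) (m+1)]
  rw [Finset.sum_range_succ (fun j => dnExt (m+4) a j * dnExt (m+4) a (j+1)) (m+1)]
  have hnm2 := dnC_nm2 (m+4) a (by omega)
  have hnm1 := dnC_nm1 (m+4) a (by omega)
  simp only [e1, e2, e3] at hnm2 hnm1
  rw [dnC_zero, hnm2, hnm1]
  rw [show m+1+1 = m+2 from rfl]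
  have hchain : ∑ j ∈ Finset.range (m+1), dnC (m+4) a (j+1) ^ 2
      = ∑ j ∈ Finset.range (m+1), (dnExt (m+4) a (j+1) - dnExt (m+4) a j) ^ 2 := by
    refine Finset.sum_congr rfl fun j hj => ?_
    rw [dnC_chain (m+4) a (j+1) (by omega) (by omega)
      (by simp only [Finset.mem_range] at hj; omega)]
    simp
  rw [hchain]
  have hexp : ∑ j ∈ Finset.range (m+1), (dnExt (m+4) a (j+1) - dnExt (m+4) a j) ^ 2
      = (∑ j ∈ Finset.range (m+1), dnExt (m+4) a (j+1) ^ 2)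
        + (∑ j ∈ Finset.range (m+1), dnExt (m+4) a j ^ 2)
        - 2 * ∑ j ∈ Finset.range (m+1), dnExt (m+4) a j * dnExt (m+4) a (j+1) := by
    rw [Finset.mul_sum, ← Finset.sum_add_distrib, ← Finset.sum_sub_distrib]
    refine Finset.sum_congr rfl fun j _ => by ring
  rw [hexp]
  have hshift : (∑ j ∈ Finset.range (m+1), dnExt (m+4) a (j+1) ^ 2)
      = (∑ j ∈ Finset.range (m+1), dnExt (m+4) a j ^ 2) + dnExt (m+4) a (m+1) ^ 2
        - dnExt (m+4) a 0 ^ 2 := by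
    have h1 := Finset.sum_range_succ' (fun j => dnExt (m+4) a j ^ 2) (m+1)
    have h2 := Finset.sum_range_succ (fun j => dnExt (m+4) a j ^ 2) (m+1)
    rw [h2] at h1
    linarith [h1]
  rw [hshift]
  ring

lemma dnG_symm (n : ℕ) (p q : ℕ) : dnG n 1 p q = dnG n 1 q p := by
  unfold dnG
  split_ifs <;> omega

lemma dn_qsingle (n : ℕ) (a : Fin n → ℤ) (i : Fin (n+1)) :
    qform (gramD n 1) (lD n a) (Pi.single i 1)
      = ∑ p ∈ Finset.range (n+1), dnX n a p * dnG n 1 (i : ℕ) p := by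
  rw [dn_qform_range n a (Pi.single i 1) (fun q => if q = (i : ℕ) then 1 else 0)
    (fun q => by simp [Pi.single_apply, Fin.val_inj])]
  refine Finset.sum_congr rfl fun p hp => ?_
  have : ∀ q : ℕ, dnX n a p * dnG n 1 p q * (if q = (i:ℕ) then 1 else 0)
      = if q = (i:ℕ) then dnX n a p * dnG n 1 p q else 0 := by
    intro q; split_ifs <;> ring
  simp only [this]
  rw [dn_sum_delta (m := n+1) ((i:ℕ)) (fun q => dnX n a p * dnG n 1 p q) (by omega)]
  rw [dnG_symm]

lemma dn_pair (n : ℕ) (hn : 4 ≤ n) (a : Fin n → ℤ) (i : Fin (n+1)) (hi : 1 ≤ (i:ℕ)) :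
    qform (gramD n 1) (lD n a) (Pi.single i 1)
      = if (i:ℕ) = n then -(dnC n a (n-2) + dnC n a (n-1))
        else dnC n a (i:ℕ) - dnC n a ((i:ℕ) - 1) := by
  rw [dn_qsingle n a i]
  have hin : (i : ℕ) < n + 1 := i.isLt
  set i' := (i : ℕ) with hidef
  have hpt : ∀ p : ℕ, dnX n a p * dnG n 1 i' p =
      (if i' = 0 ∧ p = 0 then -dnX n a p else 0)
    + (if 1 ≤ i' ∧ p = i' then -(dnX n a p * 2) else 0)
    + (if (1 ≤ i' ∧ i' + 1 < n) ∧ p = i' + 1 then dnX n a p else 0)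
    + (if (2 ≤ i' ∧ i' < n) ∧ p = i' - 1 then dnX n a p else 0)
    + (if i' = n - 2 ∧ p = n then dnX n a p else 0)
    + (if i' = n ∧ p = n - 2 then dnX n a p else 0)
    + (if i' = 0 ∧ p = 1 then dnX n a p else 0)
    + (if i' = 1 ∧ p = 0 then dnX n a p else 0) := by
    intro p
    rw [dnGrow n hn i' p]
    simp only [mul_add, mul_ite, mul_zero, mul_one, mul_neg, mul_neg_one]
  simp only [hpt]
  simp only [Finset.sum_add_distrib]
  rw [dn_sum_ite (m := n+1) (i' = 0 : Prop) 0 (fun p => -dnX n a p) (fun _ => by omega)]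
  rw [dn_sum_ite (m := n+1) (1 ≤ i' : Prop) i' (fun p => -(dnX n a p * 2)) (fun _ => by omega)]
  rw [dn_sum_ite (m := n+1) (1 ≤ i' ∧ i' + 1 < n : Prop) (i'+1) (fun p => dnX n a p)
    (fun h => by omega)]
  rw [dn_sum_ite (m := n+1) (2 ≤ i' ∧ i' < n : Prop) (i'-1) (fun p => dnX n a p)
    (fun h => by omega)]
  rw [dn_sum_ite (m := n+1) (i' = n - 2 : Prop) n (fun p => dnX n a p) (fun _ => by omega)]
  rw [dn_sum_ite (m := n+1) (i' = n : Prop) (n-2) (fun p => dnX n a p) (fun _ => by omega)]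
  rw [dn_sum_ite (m := n+1) (i' = 0 : Prop) 1 (fun p => dnX n a p) (fun _ => by omega)]
  rw [dn_sum_ite (m := n+1) (i' = 1 : Prop) 0 (fun p => dnX n a p) (fun _ => by omega)]
  by_cases h1 : i' = n
  · rw [if_neg (by omega), if_pos (by omega), if_neg (by omega), if_neg (by omega),
      if_neg (by omega), if_pos h1, if_neg (by omega), if_neg (by omega), if_pos h1]
    rw [h1, dnX_pos n a n (by omega), dnX_pos n a (n-2) (by omega),
      show n-2-1 = n-3 from by omega, dnC_nm2 n a hn, dnC_nm1 n a hn]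
    ring
  · by_cases h2 : i' = n - 1
    · rw [if_neg (by omega), if_pos (by omega), if_neg (by omega), if_pos (by omega),
        if_neg (by omega), if_neg h1, if_neg (by omega), if_neg (by omega), if_neg h1]
      rw [h2, dnX_pos n a (n-1) (by omega), show n-1-1 = n-2 from by omega,
        dnX_pos n a (n-2) (by omega), show n-2-1 = n-3 from by omega,
        dnC_nm1 n a hn, dnC_nm2 n a hn]
      ring
    · by_cases h3 : i' = n - 2
      · rw [if_neg (by omega), if_pos (by omega), if_pos (by omega), if_pos (by omega),
          if_pos h3, if_neg h1, if_neg (by omega), if_neg (by omega), if_neg h1]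
        rw [h3, show n-2+1 = n-1 from by omega, show n-2-1 = n-3 from by omega,
          dnX_pos n a (n-2) (by omega), show n-2-1 = n-3 from by omega,
          dnX_pos n a (n-1) (by omega), show n-1-1 = n-2 from by omega,
          dnX_pos n a (n-3) (by omega), show n-3-1 = n-4 from by omega,
          dnX_pos n a n (by omega),
          dnC_nm2 n a hn, dnC_chain n a (n-3) hn (by omega) (by omega),
          show n-3-1 = n-4 from by omega]
        ring
      · by_cases h4 : i' = 1
        · rw [if_neg (by omega), if_pos (by omega), if_pos (by omega), if_neg (by omega),
            if_neg h3, if_neg h1, if_neg (by omega), if_pos h4, if_neg h1]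
          rw [h4, dnX_pos n a 1 (by omega), show (1:ℕ)-1 = 0 from rfl,
            dnX_pos n a 2 (by omega), show (2:ℕ)-1 = 1 from rfl, dnX_zero,
            dnC_chain n a 1 hn (by omega) (by omega), show (1:ℕ)-1 = 0 from rfl, dnC_zero]
          ring
        · rw [if_neg (by omega), if_pos (by omega), if_pos (by omega), if_pos (by omega),
            if_neg h3, if_neg h1, if_neg (by omega), if_neg h4, if_neg h1]
          rw [dnX_pos n a i' (by omega), dnX_pos n a (i'+1) (by omega),
            show i'+1-1 = i' from by omega, dnX_pos n a (i'-1) (by omega),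
            show i'-1-1 = i'-2 from by omega,
            dnC_chain n a i' hn (by omega) (by omega),
            dnC_chain n a (i'-1) hn (by omega) (by omega),
            show i'-1-1 = i'-2 from by omega]
          ring

def dnPsi (n : ℕ) (e : Bool) (t : ℕ) : Fin n → ℤ :=
  if e then
    (fun p => if t = n-1 then (if (p:ℕ) = n-2 then 0 else 1)
              else (if t ≤ (p:ℕ) ∧ (p:ℕ) ≤ n-3 then 2 else 1))
  else fun p => if (p:ℕ) < t then 1 else 0

def dnSgn (e : Bool) : ℤ := if e then 1 else -1

lemma dnSgn_false : dnSgn false = -1 := rfl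

lemma dnSgn_true : dnSgn true = 1 := rfl

lemma dnPsi_nonneg (n : ℕ) (e : Bool) (t : ℕ) : ∀ p, 0 ≤ dnPsi n e t p := by
  intro p
  cases e <;> simp only [dnPsi, if_true, if_false, Bool.false_eq_true, ite_false, ite_true] <;>
    split_ifs <;> norm_num

lemma dnPsiM_ext (n t k : ℕ) (hk : k < n) :
    dnExt n (dnPsi n false t) k = if k < t then 1 else 0 := by
  unfold dnExt dnPsi
  rw [dif_pos hk]
  simp

lemma dnPsiP_ext (n t k : ℕ) (hk : k < n) :
    dnExt n (dnPsi n true t) k = if t = n-1 then (if k = n-2 then 0 else 1)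
      else (if t ≤ k ∧ k ≤ n-3 then 2 else 1) := by
  unfold dnExt dnPsi
  rw [dif_pos hk]
  simp

lemma dnC_psi (n : ℕ) (hn : 4 ≤ n) (e : Bool) (t : ℕ) (ht : t < n) (j : ℕ) (hj : j < n) :
    dnC n (dnPsi n e t) j = if j = t then dnSgn e else 0 := by
  cases e
  · by_cases h0 : j = 0
    · subst h0
      rw [dnC_zero, dnPsiM_ext n t 0 (by omega)]
      simp only [dnSgn_false]
      split_ifs <;> omega
    · by_cases h1 : j = n - 1
      · subst h1
        rw [dnC_nm1 n _ hn, dnPsiM_ext n t (n-1) (by omega), dnPsiM_ext n t (n-2) (by omega)]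
        simp only [dnSgn_false]
        split_ifs <;> omega
      · by_cases h2 : j = n - 2
        · subst h2
          rw [dnC_nm2 n _ hn, dnPsiM_ext n t (n-2) (by omega), dnPsiM_ext n t (n-1) (by omega),
            dnPsiM_ext n t (n-3) (by omega)]
          simp only [dnSgn_false]
          split_ifs <;> omega
        · rw [dnC_chain n _ j hn (by omega) (by omega), dnPsiM_ext n t j (by omega),
            dnPsiM_ext n t (j-1) (by omega)]
          simp only [dnSgn_false]
          split_ifs <;> omega
  · by_cases h0 : j = 0
    · subst h0
      rw [dnC_zero, dnPsiP_ext n t 0 (by omega)]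
      simp only [dnSgn_true]
      split_ifs <;> omega
    · by_cases h1 : j = n - 1
      · subst h1
        rw [dnC_nm1 n _ hn, dnPsiP_ext n t (n-1) (by omega), dnPsiP_ext n t (n-2) (by omega)]
        simp only [dnSgn_true]
        split_ifs <;> omega
      · by_cases h2 : j = n - 2
        · subst h2
          rw [dnC_nm2 n _ hn, dnPsiP_ext n t (n-2) (by omega), dnPsiP_ext n t (n-1) (by omega),
            dnPsiP_ext n t (n-3) (by omega)]
          simp only [dnSgn_true]
          split_ifs <;> omega
        · rw [dnC_chain n _ j hn (by omega) (by omega), dnPsiP_ext n t j (by omega),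
            dnPsiP_ext n t (j-1) (by omega)]
          simp only [dnSgn_true]
          split_ifs <;> omega

lemma dnSgn_sq (e : Bool) : dnSgn e ^ 2 = 1 := by cases e <;> rfl

lemma dn_psi_mem (n : ℕ) (hn : 4 ≤ n) (e : Bool) (t : ℕ) (ht : t < n) :
    dnPsi n e t ∈ ID n 1 := by
  refine ⟨dnPsi_nonneg n e t, ?_⟩
  have hk := dn_key n hn (dnPsi n e t)
  have hsum : ∑ j ∈ Finset.range n, dnC n (dnPsi n e t) j ^ 2 = 1 := by
    have h1 : ∀ j ∈ Finset.range n, dnC n (dnPsi n e t) j ^ 2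
        = if j = t then 1 else 0 := by
      intro j hj
      rw [dnC_psi n hn e t ht j (Finset.mem_range.mp hj)]
      split_ifs
      · exact dnSgn_sq e
      · ring
    rw [Finset.sum_congr rfl h1, dn_sum_delta (m := n) t (fun _ => 1) ht]
  rw [hsum] at hk
  omega

lemma dn_sqsum (s : Finset ℕ) (f : ℕ → ℤ) (h : ∑ j ∈ s, (f j)^2 = 1) :
    ∃ t ∈ s, (f t = 1 ∨ f t = -1) ∧ ∀ j ∈ s, j ≠ t → f j = 0 := by
  classical
  induction s using Finset.induction_on with
  | empty => simp at h
  | @insert a s ha ih =>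
    rw [Finset.sum_insert ha] at h
    have hrest : 0 ≤ ∑ j ∈ s, (f j)^2 := Finset.sum_nonneg fun j _ => sq_nonneg (f j)
    have hfa : 0 ≤ f a ^ 2 := sq_nonneg _
    have hle : f a ^ 2 ≤ 1 := by omega
    have hb1 : f a ≤ 1 := by nlinarith [sq_nonneg (f a - 1)]
    have hb2 : -1 ≤ f a := by nlinarith [sq_nonneg (f a + 1)]
    have hcases : f a = -1 ∨ f a = 0 ∨ f a = 1 := by omega
    rcases hcases with h1 | h1 | h1
    · refine ⟨a, Finset.mem_insert_self a s, Or.inr h1, ?_⟩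
      have hz : ∑ j ∈ s, (f j)^2 = 0 := by rw [h1] at h; norm_num at h; exact h
      intro j hj hja
      rcases Finset.mem_insert.mp hj with rfl | hjs
      · exact absurd rfl hja
      · have := (Finset.sum_eq_zero_iff_of_nonneg fun j _ => sq_nonneg (f j)).mp hz j hjs
        exact pow_eq_zero_iff (n := 2) (by norm_num) |>.mp this
    · have hz : ∑ j ∈ s, (f j)^2 = 1 := by rw [h1] at h; norm_num at h; exact h
      obtain ⟨t, hts, hpm, hzero⟩ := ih hz
      refine ⟨t, Finset.mem_insert_of_mem hts, hpm, ?_⟩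
      intro j hj hjt
      rcases Finset.mem_insert.mp hj with rfl | hjs
      · exact h1
      · exact hzero j hjs hjt
    · refine ⟨a, Finset.mem_insert_self a s, Or.inl h1, ?_⟩
      have hz : ∑ j ∈ s, (f j)^2 = 0 := by rw [h1] at h; norm_num at h; exact h
      intro j hj hja
      rcases Finset.mem_insert.mp hj with rfl | hjs
      · exact absurd rfl hja
      · have := (Finset.sum_eq_zero_iff_of_nonneg fun j _ => sq_nonneg (f j)).mp hz j hjs
        exact pow_eq_zero_iff (n := 2) (by norm_num) |>.mp this

lemma dnExt_apply (n : ℕ) (a : Fin n → ℤ) (p : Fin n) : dnExt n a (p : ℕ) = a p := by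
  unfold dnExt
  rw [dif_pos p.isLt]

lemma dn_recon (n : ℕ) (hn : 4 ≤ n) (a : Fin n → ℤ) (t : ℕ) (ht : t < n) (e : Bool)
    (hcc : ∀ j, j < n → dnC n a j = if j = t then dnSgn e else 0) :
    a = dnPsi n e t := by
  have h0 := hcc 0 (by omega)
  rw [dnC_zero] at h0
  have hm2 := hcc (n-2) (by omega)
  rw [dnC_nm2 n a hn] at hm2
  have hm1 := hcc (n-1) (by omega)
  rw [dnC_nm1 n a hn] at hm1
  cases e
  · simp only [dnSgn_false] at h0 hm2 hm1 hcc
    have key : ∀ j, j ≤ n-3 → dnExt n a j = (if j < t then 1 else 0) := by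
      intro j
      induction j with
      | zero => intro _; split_ifs at h0 ⊢ <;> omega
      | succ j ih =>
        intro hj
        have hc := hcc (j+1) (by omega)
        rw [dnC_chain n a (j+1) hn (by omega) (by omega), show j+1-1 = j from by omega] at hc
        have hI := ih (by omega)
        split_ifs at hc hI ⊢ <;> omega
    have h3 := key (n-3) (le_refl _)
    have hval : ∀ k, k < n → dnExt n a k = (if k < t then 1 else 0) := by
      intro k hk
      by_cases hk3 : k ≤ n-3
      · exact key k hk3
      · by_cases hk2 : k = n-2
        · subst hk2
          split_ifs at h3 hm2 hm1 ⊢ <;> omega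
        · have hk1 : k = n-1 := by omega
          subst hk1
          split_ifs at h3 hm2 hm1 ⊢ <;> omega
    funext p
    have := hval (p : ℕ) p.isLt
    rw [dnExt_apply] at this
    rw [this]
    simp [dnPsi]
  · simp only [dnSgn_true] at h0 hm2 hm1 hcc
    have key : ∀ j, j ≤ n-3 → dnExt n a j = (if t ≤ j then 2 else 1) := by
      intro j
      induction j with
      | zero => intro _; split_ifs at h0 ⊢ <;> omega
      | succ j ih =>
        intro hj
        have hc := hcc (j+1) (by omega)
        rw [dnC_chain n a (j+1) hn (by omega) (by omega), show j+1-1 = j from by omega] at hc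
        have hI := ih (by omega)
        split_ifs at hc hI ⊢ <;> omega
    have h3 := key (n-3) (le_refl _)
    have hval : ∀ k, k < n → dnExt n a k
        = (if t = n-1 then (if k = n-2 then 0 else 1) else (if t ≤ k ∧ k ≤ n-3 then 2 else 1)) := by
      intro k hk
      by_cases hk3 : k ≤ n-3
      · have := key k hk3
        split_ifs at this ⊢ <;> omega
      · by_cases hk2 : k = n-2
        · subst hk2
          split_ifs at h3 hm2 hm1 ⊢ <;> omega
        · have hk1 : k = n-1 := by omega
          subst hk1
          split_ifs at h3 hm2 hm1 ⊢ <;> omega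
    funext p
    have := hval (p : ℕ) p.isLt
    rw [dnExt_apply] at this
    rw [this]
    simp [dnPsi]

lemma dn_ID_eq (n : ℕ) (hn : 4 ≤ n) :
    ID n 1 = Set.range (fun z : Bool × Fin n => dnPsi n z.1 (z.2 : ℕ)) := by
  ext a
  constructor
  · rintro ⟨hpos, hq⟩
    have hsq : ∑ j ∈ Finset.range n, (dnC n a j)^2 = 1 := by
      rw [dn_key n hn a, hq]
      norm_num
    obtain ⟨t, htmem, hpm, hzero⟩ := dn_sqsum (Finset.range n) _ hsq
    have ht : t < n := Finset.mem_range.mp htmem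
    rcases hpm with h1 | h1
    · refine ⟨(true, ⟨t, ht⟩), ?_⟩
      refine (dn_recon n hn a t ht true ?_).symm
      intro j hj
      rw [dnSgn_true]
      split_ifs with h
      · rw [h]; exact h1
      · exact hzero j (Finset.mem_range.mpr hj) h
    · refine ⟨(false, ⟨t, ht⟩), ?_⟩
      refine (dn_recon n hn a t ht false ?_).symm
      intro j hj
      rw [dnSgn_false]
      split_ifs with h
      · rw [h]; exact h1
      · exact hzero j (Finset.mem_range.mpr hj) h
  · rintro ⟨⟨e, t⟩, rfl⟩
    exact dn_psi_mem n hn e (t : ℕ) t.isLt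

lemma dn_psi_inj (n : ℕ) (hn : 4 ≤ n) :
    Function.Injective (fun z : Bool × Fin n => dnPsi n z.1 (z.2 : ℕ)) := by
  rintro ⟨e, t⟩ ⟨e', t'⟩ h
  simp only at h
  have h1 := congrArg (fun a => dnC n a (t : ℕ)) h
  have h2 := congrArg (fun a => dnC n a (t' : ℕ)) h
  rw [dnC_psi n hn e (t:ℕ) t.isLt (t:ℕ) t.isLt,
    dnC_psi n hn e' (t':ℕ) t'.isLt (t:ℕ) t.isLt] at h1
  rw [dnC_psi n hn e (t:ℕ) t.isLt (t':ℕ) t'.isLt,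
    dnC_psi n hn e' (t':ℕ) t'.isLt (t':ℕ) t'.isLt] at h2
  rw [if_pos rfl] at h1
  rw [if_pos rfl] at h2
  have htt : (t:ℕ) = (t':ℕ) := by
    by_contra hne
    rw [if_neg hne] at h1
    cases e <;> simp [dnSgn_true, dnSgn_false] at h1
  have hee : e = e' := by
    rw [if_pos htt] at h1
    cases e <;> cases e' <;> simp [dnSgn_true, dnSgn_false] at h1 ⊢
  exact Prod.ext hee (Fin.ext htt)

lemma dn_pair_psi (n : ℕ) (hn : 4 ≤ n) (i : Fin (n+1)) (hi : 1 ≤ (i:ℕ)) (e : Bool) (t : ℕ)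
    (ht : t < n) :
    qform (gramD n 1) (lD n (dnPsi n e t)) (Pi.single i 1)
      = if (i:ℕ) = n then
          -((if n-2 = t then dnSgn e else 0) + (if n-1 = t then dnSgn e else 0))
        else (if (i:ℕ) = t then dnSgn e else 0) - (if (i:ℕ)-1 = t then dnSgn e else 0) := by
  rw [dn_pair n hn _ i hi]
  by_cases h : (i:ℕ) = n
  · rw [if_pos h, if_pos h, dnC_psi n hn e t ht (n-2) (by omega),
      dnC_psi n hn e t ht (n-1) (by omega)]
  · rw [if_neg h, if_neg h, dnC_psi n hn e t ht (i:ℕ) (by omega),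
      dnC_psi n hn e t ht ((i:ℕ)-1) (by omega)]

def dnPhi (n : ℕ) : Bool × Fin n → (Fin n → ℤ) := fun z => dnPsi n z.1 (z.2 : ℕ)

lemma dn_count (n : ℕ) (hn : 4 ≤ n) (P : (Fin n → ℤ) → ℤ)
    (x1 x2 x3 x4 : Bool × Fin n)
    (h1 : {z | P (dnPhi n z) = 1} = {x1, x2})
    (h2 : {z | P (dnPhi n z) = -1} = {x3, x4})
    (h0 : {z | P (dnPhi n z) = 0} = ({x1, x2, x3, x4} : Set (Bool × Fin n))ᶜ)
    (d12 : x1 ≠ x2) (d13 : x1 ≠ x3) (d14 : x1 ≠ x4) (d23 : x2 ≠ x3) (d24 : x2 ≠ x4)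
    (d34 : x3 ≠ x4) :
    {a ∈ ID n 1 | P a = 1}.ncard = 2 ∧ {a ∈ ID n 1 | P a = -1}.ncard = 2
      ∧ {a ∈ ID n 1 | P a = 0}.ncard = 2 * n - 4 := by
  have hinj : Function.Injective (dnPhi n) := dn_psi_inj n hn
  have himg : ∀ v : ℤ, {a ∈ ID n 1 | P a = v} = dnPhi n '' {z | P (dnPhi n z) = v} := by
    intro v
    ext x
    constructor
    · rintro ⟨hx, hv⟩
      rw [dn_ID_eq n hn] at hx
      obtain ⟨z, rfl⟩ := hx
      exact ⟨z, hv, rfl⟩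
    · rintro ⟨z, hv, rfl⟩
      refine ⟨?_, hv⟩
      rw [dn_ID_eq n hn]
      exact ⟨z, rfl⟩
  refine ⟨?_, ?_, ?_⟩
  · rw [himg 1, Set.ncard_image_of_injOn hinj.injOn, h1, Set.ncard_pair d12]
  · rw [himg (-1), Set.ncard_image_of_injOn hinj.injOn, h2, Set.ncard_pair d34]
  · rw [himg 0, Set.ncard_image_of_injOn hinj.injOn, h0]
    have hcompl := Set.ncard_add_ncard_compl ({x1, x2, x3, x4} : Set (Bool × Fin n))
    have hcard4 : ({x1, x2, x3, x4} : Set (Bool × Fin n)).ncard = 4 := by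
      rw [Set.ncard_insert_of_notMem (by simp [d12, d13, d14]),
        Set.ncard_insert_of_notMem (by simp [d23, d24]), Set.ncard_pair d34]
    have hNat : Nat.card (Bool × Fin n) = 2 * n := by
      simp [Nat.card_eq_fintype_card]
    omega

/-- in the `(Dₙ, C₁)` lattice, for each index `i` with `1 ≤ i ≤ n`: exactly `2`
elements `a ∈ I` satisfy `⟨l(a), Cᵢ⟩ = 1`, exactly `2` satisfy `⟨l(a), Cᵢ⟩ = -1`, and
exactly `2n - 4` satisfy `⟨l(a), Cᵢ⟩ = 0`. -/
theorem stmt10 (n : ℕ) (hn : 4 ≤ n) (i : Fin (n + 1)) (hi : 1 ≤ (i : ℕ)) :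
    {a ∈ ID n 1 | qform (gramD n 1) (lD n a) (Pi.single i 1) = 1}.ncard = 2
    ∧ {a ∈ ID n 1 | qform (gramD n 1) (lD n a) (Pi.single i 1) = -1}.ncard = 2
    ∧ {a ∈ ID n 1 | qform (gramD n 1) (lD n a) (Pi.single i 1) = 0}.ncard = 2 * n - 4 := by
  by_cases hcase : (i:ℕ) = n
  · refine dn_count n hn _ (false, ⟨n-2, by omega⟩) (false, ⟨n-1, by omega⟩)
      (true, ⟨n-2, by omega⟩) (true, ⟨n-1, by omega⟩) ?_ ?_ ?_
      (by simp [Prod.ext_iff, Fin.ext_iff]; omega)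
      (by simp [Prod.ext_iff, Fin.ext_iff])
      (by simp [Prod.ext_iff, Fin.ext_iff])
      (by simp [Prod.ext_iff, Fin.ext_iff])
      (by simp [Prod.ext_iff, Fin.ext_iff])
      (by simp [Prod.ext_iff, Fin.ext_iff]; omega)
    · ext ⟨e, t⟩
      simp only [Set.mem_setOf_eq, dnPhi]
      rw [dn_pair_psi n hn i hi e (t:ℕ) t.isLt, if_pos hcase]
      simp only [Set.mem_insert_iff, Set.mem_singleton_iff, Prod.mk.injEq, Fin.ext_iff]
      cases e <;> simp [dnSgn_false, dnSgn_true] <;> split_ifs <;> omega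
    · ext ⟨e, t⟩
      simp only [Set.mem_setOf_eq, dnPhi]
      rw [dn_pair_psi n hn i hi e (t:ℕ) t.isLt, if_pos hcase]
      simp only [Set.mem_insert_iff, Set.mem_singleton_iff, Prod.mk.injEq, Fin.ext_iff]
      cases e <;> simp [dnSgn_false, dnSgn_true] <;> split_ifs <;> omega
    · ext ⟨e, t⟩
      simp only [Set.mem_setOf_eq, dnPhi, Set.mem_compl_iff]
      rw [dn_pair_psi n hn i hi e (t:ℕ) t.isLt, if_pos hcase]
      simp only [Set.mem_insert_iff, Set.mem_singleton_iff, Prod.mk.injEq, Fin.ext_iff]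
      cases e <;> simp [dnSgn_false, dnSgn_true] <;> split_ifs <;> omega
  · refine dn_count n hn _ (true, ⟨(i:ℕ), by omega⟩) (false, ⟨(i:ℕ)-1, by omega⟩)
      (false, ⟨(i:ℕ), by omega⟩) (true, ⟨(i:ℕ)-1, by omega⟩) ?_ ?_ ?_
      (by simp [Prod.ext_iff, Fin.ext_iff])
      (by simp [Prod.ext_iff, Fin.ext_iff])
      (by simp [Prod.ext_iff, Fin.ext_iff]; omega)
      (by simp [Prod.ext_iff, Fin.ext_iff]; omega)
      (by simp [Prod.ext_iff, Fin.ext_iff])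
      (by simp [Prod.ext_iff, Fin.ext_iff])
    · ext ⟨e, t⟩
      simp only [Set.mem_setOf_eq, dnPhi]
      rw [dn_pair_psi n hn i hi e (t:ℕ) t.isLt, if_neg hcase]
      simp only [Set.mem_insert_iff, Set.mem_singleton_iff, Prod.mk.injEq, Fin.ext_iff]
      cases e <;> simp [dnSgn_false, dnSgn_true] <;> split_ifs <;> omega
    · ext ⟨e, t⟩
      simp only [Set.mem_setOf_eq, dnPhi]
      rw [dn_pair_psi n hn i hi e (t:ℕ) t.isLt, if_neg hcase]
      simp only [Set.mem_insert_iff, Set.mem_singleton_iff, Prod.mk.injEq, Fin.ext_iff]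
      cases e <;> simp [dnSgn_false, dnSgn_true] <;> split_ifs <;> omega
    · ext ⟨e, t⟩
      simp only [Set.mem_setOf_eq, dnPhi, Set.mem_compl_iff]
      rw [dn_pair_psi n hn i hi e (t:ℕ) t.isLt, if_neg hcase]
      simp only [Set.mem_insert_iff, Set.mem_singleton_iff, Prod.mk.injEq, Fin.ext_iff]
      cases e <;> simp [dnSgn_false, dnSgn_true] <;> split_ifs <;> omega
end

section
/- In the (D_n, C_n) lattice, the set I = { a ∈ ℤ^n : a_i ≥ 0 for all i and ⟨l(a), l(a)⟩ = −1 } has cardinality 2^{n−1}. -/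
/-! Helpers -/

/-- ℕ-indexed version of the coefficient vector. -/
def bv (n : ℕ) (a : Fin n → ℤ) : ℕ → ℤ := fun m => if h : m < n then a ⟨m, h⟩ else 0

/-- ℕ-indexed version of `lD`. -/
def Lv (n : ℕ) (a : Fin n → ℤ) : ℕ → ℤ := fun m => if m = 0 then 1 else bv n a (m - 1)

/-- ℕ-indexed Gram matrix. -/
def Gm (n k : ℕ) (i j : ℕ) : ℤ :=
  if i = j then (if i = 0 then -1 else -2)
  else if (1 ≤ i ∧ j = i + 1 ∧ j < n)
      ∨ (1 ≤ j ∧ i = j + 1 ∧ i < n)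
      ∨ (i = n - 2 ∧ j = n) ∨ (j = n - 2 ∧ i = n)
      ∨ (i = 0 ∧ j = k) ∨ (j = 0 ∧ i = k) then 1
  else 0

lemma gramD_eq (n k : ℕ) (i j : Fin (n+1)) : gramD n k i j = Gm n k (i : ℕ) (j : ℕ) := by
  simp only [gramD, Gm, Fin.ext_iff]

lemma lD_eq (n : ℕ) (a : Fin n → ℤ) (i : Fin (n+1)) : lD n a i = Lv n a (i : ℕ) := by
  induction i using Fin.cases with
  | zero => simp [lD, Lv]
  | succ j => simp [lD, Lv, bv, Fin.is_lt]

lemma qform_sum_range (n k : ℕ) (a : Fin n → ℤ) :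
    qform (gramD n k) (lD n a) (lD n a) =
      ∑ i ∈ Finset.range (n+1), ∑ j ∈ Finset.range (n+1),
        Lv n a i * Gm n k i j * Lv n a j := by
  rw [qform]
  simp only [gramD_eq, lD_eq]
  have h1 : ∀ i : ℕ, ∑ j : Fin (n+1), Lv n a i * Gm n k i (j : ℕ) * Lv n a (j : ℕ)
      = ∑ j ∈ Finset.range (n+1), Lv n a i * Gm n k i j * Lv n a j :=
    fun i => Fin.sum_univ_eq_sum_range (fun j => Lv n a i * Gm n k i j * Lv n a j) (n+1)
  simp_rw [h1]
  exact Fin.sum_univ_eq_sum_range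
    (fun i => ∑ j ∈ Finset.range (n+1), Lv n a i * Gm n k i j * Lv n a j) (n+1)

/-! Decomposition of the Gram matrix into elementary pieces. -/

set_option maxHeartbeats 2000000 in
lemma gm_decomp (n : ℕ) (hn : 4 ≤ n) (i j : ℕ) :
    Gm n n i j =
      (if i = j then (if i = 0 then (-1:ℤ) else -2) else 0)
      + (if 1 ≤ i ∧ j = i + 1 ∧ j < n then 1 else 0)
      + (if 1 ≤ j ∧ i = j + 1 ∧ i < n then 1 else 0)
      + (if i = n - 2 ∧ j = n then 1 else 0)
      + (if j = n - 2 ∧ i = n then 1 else 0)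
      + (if i = 0 ∧ j = n then 1 else 0)
      + (if j = 0 ∧ i = n then 1 else 0) := by
  unfold Gm
  split_ifs <;> omega

/-- Sum against a single-entry matrix. -/
lemma sum_single_entry (N : ℕ) (L : ℕ → ℤ) (p q : ℕ) (hp : p < N) (hq : q < N) :
    ∑ i ∈ Finset.range N, ∑ j ∈ Finset.range N,
      L i * (if i = p ∧ j = q then (1:ℤ) else 0) * L j = L p * L q := by
  rw [Finset.sum_eq_single p]
  · rw [Finset.sum_eq_single q]
    · simp
    · intro j _ hj; simp [hj]
    · intro h; exact absurd (Finset.mem_range.2 hq) h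
  · intro i _ hi
    apply Finset.sum_eq_zero
    intro j _
    simp [hi]
  · intro h; exact absurd (Finset.mem_range.2 hp) h

/-- Transposing the condition doesn't change the double sum. -/
lemma sum_transpose (N : ℕ) (L : ℕ → ℤ) (P : ℕ → ℕ → Prop) [DecidableRel P] :
    ∑ i ∈ Finset.range N, ∑ j ∈ Finset.range N,
      L i * (if P j i then (1:ℤ) else 0) * L j
    = ∑ i ∈ Finset.range N, ∑ j ∈ Finset.range N,
      L i * (if P i j then (1:ℤ) else 0) * L j := by
  rw [Finset.sum_comm]
  exact Finset.sum_congr rfl fun i _ => Finset.sum_congr rfl fun j _ => by ring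

/-- Sum against the diagonal. -/
lemma sum_diag (N : ℕ) (L : ℕ → ℤ) (d : ℕ → ℤ) :
    ∑ i ∈ Finset.range N, ∑ j ∈ Finset.range N,
      L i * (if i = j then d i else 0) * L j = ∑ i ∈ Finset.range N, L i * d i * L i := by
  refine Finset.sum_congr rfl fun i hi => ?_
  rw [Finset.sum_eq_single i]
  · simp
  · intro j _ hj; simp [Ne.symm hj]
  · intro h; exact absurd hi h

/-- Sum against the chain matrix. -/
lemma sum_chain (n : ℕ) (hn : 4 ≤ n) (L : ℕ → ℤ) :
    ∑ i ∈ Finset.range (n+1), ∑ j ∈ Finset.range (n+1),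
      L i * (if 1 ≤ i ∧ j = i + 1 ∧ j < n then (1:ℤ) else 0) * L j
    = ∑ m ∈ Finset.range (n-2), L (m+1) * L (m+2) := by
  have hinner : ∀ i, ∑ j ∈ Finset.range (n+1),
      L i * (if 1 ≤ i ∧ j = i + 1 ∧ j < n then (1:ℤ) else 0) * L j
      = if 1 ≤ i ∧ i + 1 < n then L i * L (i+1) else 0 := by
    intro i
    by_cases h : 1 ≤ i ∧ i + 1 < n
    · rw [if_pos h, Finset.sum_eq_single (i+1)]
      · simp [h]
      · intro j _ hj; simp only [if_neg (by omega : ¬(1 ≤ i ∧ j = i + 1 ∧ j < n))]; ring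
      · intro hmem; exact absurd (Finset.mem_range.2 (by omega)) hmem
    · rw [if_neg h]
      apply Finset.sum_eq_zero
      intro j _
      rw [if_neg (by omega)]; ring
  simp_rw [hinner]
  rw [← Finset.sum_subset (s₁ := Finset.Ico 1 (n-1)) (by intro x hx; simp at hx ⊢; omega)
    (by intro x _ hx; simp only [Finset.mem_Ico] at hx; rw [if_neg (by omega)])]
  rw [Finset.sum_Ico_eq_sum_range]
  refine Finset.sum_congr (by rw [Nat.sub_sub]) fun m hm => ?_
  simp only [Finset.mem_range] at hm
  rw [if_pos (by omega)]
  congr 1 <;> congr 1 <;> omega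

set_option maxHeartbeats 1000000 in
lemma qform_eval (n : ℕ) (hn : 4 ≤ n) (a : Fin n → ℤ) :
    qform (gramD n n) (lD n a) (lD n a) =
      -1 + 2 * bv n a (n-1) - 2 * ∑ m ∈ Finset.range n, (bv n a m)^2
        + 2 * ∑ m ∈ Finset.range (n-2), bv n a m * bv n a (m+1)
        + 2 * bv n a (n-3) * bv n a (n-1) := by
  set L := Lv n a with hL
  rw [qform_sum_range]
  have hsplit : ∀ i j : ℕ, L i * Gm n n i j * L j =
      L i * (if i = j then (if i = 0 then (-1:ℤ) else -2) else 0) * L j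
      + L i * (if 1 ≤ i ∧ j = i + 1 ∧ j < n then (1:ℤ) else 0) * L j
      + L i * (if 1 ≤ j ∧ i = j + 1 ∧ i < n then (1:ℤ) else 0) * L j
      + L i * (if i = n - 2 ∧ j = n then (1:ℤ) else 0) * L j
      + L i * (if j = n - 2 ∧ i = n then (1:ℤ) else 0) * L j
      + L i * (if i = 0 ∧ j = n then (1:ℤ) else 0) * L j
      + L i * (if j = 0 ∧ i = n then (1:ℤ) else 0) * L j := by
    intro i j
    rw [gm_decomp n hn i j]; ring
  rw [← hL]
  simp_rw [hsplit, Finset.sum_add_distrib]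
  -- transpose pieces
  rw [sum_transpose (n+1) L (fun i j => 1 ≤ i ∧ j = i + 1 ∧ j < n)]
  rw [sum_transpose (n+1) L (fun i j => i = n - 2 ∧ j = n)]
  rw [sum_transpose (n+1) L (fun i j => i = 0 ∧ j = n)]
  -- evaluate pieces
  rw [sum_diag (n+1) L (fun i => if i = 0 then (-1:ℤ) else -2)]
  rw [sum_chain n hn L]
  rw [sum_single_entry (n+1) L (n-2) n (by omega) (by omega)]
  rw [sum_single_entry (n+1) L 0 n (by omega) (by omega)]
  -- diagonal sum
  have hdiag : ∑ i ∈ Finset.range (n+1), L i * (if i = 0 then (-1:ℤ) else -2) * L i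
      = -1 - 2 * ∑ m ∈ Finset.range n, (bv n a m)^2 := by
    rw [Finset.sum_range_succ']
    have h0 : L 0 * (if (0:ℕ) = 0 then (-1:ℤ) else -2) * L 0 = -1 := by simp [hL, Lv]
    rw [h0]
    have h1 : ∀ m, L (m+1) * (if m + 1 = 0 then (-1:ℤ) else -2) * L (m+1)
        = -2 * (bv n a m)^2 := by
      intro m; simp [hL, Lv]; ring
    simp_rw [h1]
    rw [← Finset.mul_sum]
    ring
  rw [hdiag]
  -- chain sum
  have hch : ∑ m ∈ Finset.range (n-2), L (m+1) * L (m+2)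
      = ∑ m ∈ Finset.range (n-2), bv n a m * bv n a (m+1) := by
    refine Finset.sum_congr rfl fun m hm => ?_
    simp [hL, Lv]
  rw [hch]
  -- boundary values
  have hLn : L n = bv n a (n-1) := by simp [hL, Lv]; intro h; omega
  have hLn2 : L (n-2) = bv n a (n-3) := by
    simp only [hL, Lv]
    rw [if_neg (by omega)]
    congr 1
  have hL0 : L 0 = 1 := by simp [hL, Lv]
  rw [hLn, hLn2, hL0]
  ring

/-! The change of variables `y`. -/

def gvv (n : ℕ) (a : Fin n → ℤ) : ℕ → ℤ := fun m => if m = 0 then 0 else bv n a (m-1)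

def yv (n : ℕ) (a : Fin n → ℤ) : ℕ → ℤ := fun m =>
  if m + 3 ≤ n then bv n a m - gvv n a m
  else if m = n - 2 then bv n a (n-2) + bv n a (n-1) - bv n a (n-3)
  else bv n a (n-1) - bv n a (n-2)

lemma gvv_succ (n : ℕ) (a : Fin n → ℤ) (m : ℕ) : gvv n a (m+1) = bv n a m := by
  simp [gvv]

lemma yv_low (n : ℕ) (a : Fin n → ℤ) (m : ℕ) (hm : m + 3 ≤ n) :
    yv n a m = gvv n a (m+1) - gvv n a m := by
  rw [yv, if_pos hm, gvv_succ]

lemma yv_n2 (n : ℕ) (a : Fin n → ℤ) (hn : 4 ≤ n) :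
    yv n a (n-2) = bv n a (n-2) + bv n a (n-1) - bv n a (n-3) := by
  rw [yv, if_neg (by omega), if_pos rfl]

lemma yv_n1 (n : ℕ) (a : Fin n → ℤ) (hn : 4 ≤ n) :
    yv n a (n-1) = bv n a (n-1) - bv n a (n-2) := by
  rw [yv, if_neg (by omega), if_neg (by omega)]

lemma ysum (n : ℕ) (hn : 4 ≤ n) (a : Fin n → ℤ) :
    ∑ m ∈ Finset.range n, yv n a m = 2 * bv n a (n-1) := by
  obtain ⟨p, rfl⟩ : ∃ p, n = p + 4 := ⟨n - 4, by omega⟩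
  have e2 : p + 4 - 2 = p + 2 := by omega
  have e1 : p + 4 - 1 = p + 3 := by omega
  have e3 : p + 4 - 3 = p + 1 := by omega
  rw [show (∑ m ∈ Finset.range (p+4), yv (p+4) a m)
      = ∑ m ∈ Finset.range (p+3), yv (p+4) a m + yv (p+4) a (p+3) from
      Finset.sum_range_succ _ _,
    show (∑ m ∈ Finset.range (p+3), yv (p+4) a m)
      = ∑ m ∈ Finset.range (p+2), yv (p+4) a m + yv (p+4) a (p+2) from
      Finset.sum_range_succ _ _]
  have hlow : ∑ m ∈ Finset.range (p+2), yv (p+4) a m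
      = gvv (p+4) a (p+2) - gvv (p+4) a 0 := by
    rw [← Finset.sum_range_sub (gvv (p+4) a) (p+2)]
    exact Finset.sum_congr rfl fun m hm => yv_low _ _ _ (by simp at hm; omega)
  rw [hlow, show p+3 = (p+4)-1 from by omega, show p+2 = (p+4)-2 from by omega,
    yv_n2 _ _ (by omega), yv_n1 _ _ (by omega)]
  rw [e2, e1, e3]
  have : gvv (p+4) a (p+2) = bv (p+4) a (p+1) := by rw [show p+2 = (p+1)+1 from rfl, gvv_succ]
  rw [this]
  simp [gvv]
  ring

lemma yprod (n : ℕ) (hn : 4 ≤ n) (a : Fin n → ℤ) :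
    ∑ m ∈ Finset.range n, yv n a m * (yv n a m - 1)
      = 2 * ∑ m ∈ Finset.range n, (bv n a m)^2
        - 2 * ∑ m ∈ Finset.range (n-2), bv n a m * bv n a (m+1)
        - 2 * bv n a (n-3) * bv n a (n-1) - 2 * bv n a (n-1) := by
  obtain ⟨p, rfl⟩ : ∃ p, n = p + 4 := ⟨n - 4, by omega⟩
  have e2 : p + 4 - 2 = p + 2 := by omega
  have e1 : p + 4 - 1 = p + 3 := by omega
  have e3 : p + 4 - 3 = p + 1 := by omega
  set G := gvv (p+4) a with hG
  set B := bv (p+4) a with hB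
  set Y := yv (p+4) a with hY
  -- peel the last two terms of the LHS
  rw [show (∑ m ∈ Finset.range (p+4), Y m * (Y m - 1))
      = ∑ m ∈ Finset.range (p+3), Y m * (Y m - 1) + Y (p+3) * (Y (p+3) - 1) from
      Finset.sum_range_succ _ _,
    show (∑ m ∈ Finset.range (p+3), Y m * (Y m - 1))
      = ∑ m ∈ Finset.range (p+2), Y m * (Y m - 1) + Y (p+2) * (Y (p+2) - 1) from
      Finset.sum_range_succ _ _]
  -- the low part
  have hlow : ∑ m ∈ Finset.range (p+2), Y m * (Y m - 1)
      = (B (p+1)^2 - B (p+1))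
        + 2 * ∑ m ∈ Finset.range (p+1), (B m ^ 2 - B m * B (m+1)) := by
    have step : ∀ m ∈ Finset.range (p+2), Y m * (Y m - 1)
        = ((G (m+1)^2 - G (m+1)) - (G m^2 - G m)) + 2 * (G m^2 - G m * G (m+1)) := by
      intro m hm
      simp only [Finset.mem_range] at hm
      rw [hY, yv_low _ _ _ (by omega), ← hG]
      ring
    rw [Finset.sum_congr rfl step, Finset.sum_add_distrib, ← Finset.mul_sum,
      Finset.sum_range_sub (fun m => G m^2 - G m)]
    have sh : ∑ m ∈ Finset.range (p+2), (G m^2 - G m * G (m+1))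
        = ∑ m ∈ Finset.range (p+1), (B m ^ 2 - B m * B (m+1)) := by
      rw [Finset.sum_range_succ']
      have h0 : G 0 ^ 2 - G 0 * G 1 = 0 := by simp [hG, gvv]
      have hs : ∀ m, G (m+1)^2 - G (m+1) * G (m+2) = B m ^ 2 - B m * B (m+1) := by
        intro m
        rw [hG, gvv_succ, show m+2 = (m+1)+1 from rfl, gvv_succ, ← hB]
      simp only [hs, h0, add_zero]
    rw [sh]
    have hG2 : G (p+2) = B (p+1) := by rw [hG, show p+2 = (p+1)+1 from rfl, gvv_succ, ← hB]
    have hG0 : G 0 = 0 := by simp [hG, gvv]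
    rw [hG2, hG0]
    ring
  rw [hlow]
  -- the special terms
  rw [show p+3 = (p+4)-1 from by omega, show p+2 = (p+4)-2 from by omega,
    hY, yv_n2 _ _ (by omega), yv_n1 _ _ (by omega), ← hB, e2, e1, e3]
  -- split the RHS sums
  rw [show (∑ m ∈ Finset.range (p+4), B m ^ 2)
      = ∑ m ∈ Finset.range (p+3), B m ^ 2 + B (p+3) ^ 2 from Finset.sum_range_succ _ _,
    show (∑ m ∈ Finset.range (p+3), B m ^ 2)
      = ∑ m ∈ Finset.range (p+2), B m ^ 2 + B (p+2) ^ 2 from Finset.sum_range_succ _ _,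
    show (∑ m ∈ Finset.range (p+2), B m ^ 2)
      = ∑ m ∈ Finset.range (p+1), B m ^ 2 + B (p+1) ^ 2 from Finset.sum_range_succ _ _,
    show (∑ m ∈ Finset.range (p+2), B m * B (m+1))
      = ∑ m ∈ Finset.range (p+1), B m * B (m+1) + B (p+1) * B (p+2) from
      Finset.sum_range_succ _ _]
  rw [Finset.sum_sub_distrib]
  ring

lemma tprod_nonneg_int (t : ℤ) : 0 ≤ t * (t - 1) := by
  rcases le_or_gt 1 t with h | h
  · exact mul_nonneg (by omega) (by omega)
  · have e : t * (t - 1) = (-t) * (1 - t) := by ring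
    rw [e]; exact mul_nonneg (by omega) (by omega)

lemma tprod_eq_zero (t : ℤ) : t * (t - 1) = 0 ↔ t = 0 ∨ t = 1 := by
  constructor
  · intro h
    rcases mul_eq_zero.1 h with h | h <;> omega
  · rintro (rfl | rfl) <;> ring

lemma mem_ID_iff (n : ℕ) (hn : 4 ≤ n) (a : Fin n → ℤ) :
    a ∈ ID n n ↔ (∀ i, 0 ≤ a i) ∧ ∀ m < n, yv n a m = 0 ∨ yv n a m = 1 := by
  have hq : qform (gramD n n) (lD n a) (lD n a)
      = -1 - ∑ m ∈ Finset.range n, yv n a m * (yv n a m - 1) := by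
    rw [qform_eval n hn a, yprod n hn a]; ring
  have key : qform (gramD n n) (lD n a) (lD n a) = -1
      ↔ ∀ m < n, yv n a m = 0 ∨ yv n a m = 1 := by
    rw [hq]
    constructor
    · intro h m hm
      have hz : ∑ m ∈ Finset.range n, yv n a m * (yv n a m - 1) = 0 := by omega
      have := (Finset.sum_eq_zero_iff_of_nonneg
        (fun m _ => tprod_nonneg_int (yv n a m))).1 hz m (Finset.mem_range.2 hm)
      exact (tprod_eq_zero _).1 this
    · intro h
      have hz : ∑ m ∈ Finset.range n, yv n a m * (yv n a m - 1) = 0 :=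
        Finset.sum_eq_zero fun m hm =>
          (tprod_eq_zero _).2 (h m (Finset.mem_range.1 hm))
      rw [hz]; ring
  rw [ID, Set.mem_setOf_eq, key]

/-! The parametrization by sign vectors. -/

def tsv (n : ℕ) (s : Fin (n-1) → Bool) : ℕ → ℕ :=
  fun m => if h : m < n-1 then (if s ⟨m, h⟩ then 1 else 0) else 0

def cv (n : ℕ) (s : Fin (n-1) → Bool) : ℕ := ∑ m ∈ Finset.range (n-1), tsv n s m

def FF (n : ℕ) (s : Fin (n-1) → Bool) : Fin n → ℤ := fun i =>
  if (i : ℕ) + 3 ≤ n then ((∑ j ∈ Finset.range ((i:ℕ)+1), tsv n s j : ℕ) : ℤ)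
  else if (i : ℕ) = n - 2 then ((cv n s / 2 : ℕ) : ℤ)
  else (((cv n s + 1) / 2 : ℕ) : ℤ)

lemma tsv_le_one (n : ℕ) (s : Fin (n-1) → Bool) (m : ℕ) : tsv n s m ≤ 1 := by
  rw [tsv]; split_ifs <;> omega

lemma bv_FF (n : ℕ) (s : Fin (n-1) → Bool) (m : ℕ) (hm : m < n) :
    bv n (FF n s) m = FF n s ⟨m, hm⟩ := by
  rw [bv, dif_pos hm]

lemma bv_FF_low (n : ℕ) (s : Fin (n-1) → Bool) (m : ℕ) (hm : m + 3 ≤ n) :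
    bv n (FF n s) m = ((∑ j ∈ Finset.range (m+1), tsv n s j : ℕ) : ℤ) := by
  rw [bv_FF n s m (by omega), FF, if_pos hm]

lemma bv_FF_n2 (n : ℕ) (hn : 4 ≤ n) (s : Fin (n-1) → Bool) :
    bv n (FF n s) (n-2) = ((cv n s / 2 : ℕ) : ℤ) := by
  rw [bv_FF n s (n-2) (by omega), FF]
  rw [if_neg (show ¬((n-2) + 3 ≤ n) from by omega), if_pos (rfl : n-2 = n-2)]

lemma bv_FF_n1 (n : ℕ) (hn : 4 ≤ n) (s : Fin (n-1) → Bool) :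
    bv n (FF n s) (n-1) = (((cv n s + 1) / 2 : ℕ) : ℤ) := by
  rw [bv_FF n s (n-1) (by omega), FF]
  rw [if_neg (show ¬((n-1) + 3 ≤ n) from by omega),
    if_neg (show ¬(n-1 = n-2) from by omega)]

lemma cv_split (n : ℕ) (hn : 4 ≤ n) (s : Fin (n-1) → Bool) :
    cv n s = ∑ j ∈ Finset.range (n-2), tsv n s j + tsv n s (n-2) := by
  have hr : Finset.range (n-1) = Finset.range ((n-2)+1) := by congr 1; omega
  rw [cv, hr, Finset.sum_range_succ]

lemma FF_mem (n : ℕ) (hn : 4 ≤ n) (s : Fin (n-1) → Bool) : FF n s ∈ ID n n := by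
  rw [mem_ID_iff n hn]
  constructor
  · intro i
    rw [FF]
    split_ifs <;> exact Int.natCast_nonneg _
  · intro m hm
    by_cases h3 : m + 3 ≤ n
    · rw [yv, if_pos h3, gvv]
      rcases Nat.eq_zero_or_pos m with rfl | hpos
      · rw [if_pos rfl, bv_FF_low n s 0 h3, Finset.sum_range_one]
        have := tsv_le_one n s 0
        omega
      · rw [if_neg (by omega), bv_FF_low n s m h3, bv_FF_low n s (m-1) (by omega)]
        have hsum : ∑ j ∈ Finset.range (m+1), tsv n s j
            = ∑ j ∈ Finset.range ((m-1)+1), tsv n s j + tsv n s m := by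
          rw [show (m-1)+1 = m from by omega, Finset.sum_range_succ]
        have := tsv_le_one n s m
        omega
    · by_cases h2 : m = n - 2
      · subst h2
        rw [yv_n2 n _ hn, bv_FF_n2 n hn, bv_FF_n1 n hn, bv_FF_low n s (n-3) (by omega)]
        have hsp := cv_split n hn s
        have hr : (n-3)+1 = n-2 := by omega
        rw [hr]
        have := tsv_le_one n s (n-2)
        omega
      · have hm1 : m = n - 1 := by omega
        subst hm1
        rw [yv_n1 n _ hn, bv_FF_n2 n hn, bv_FF_n1 n hn]
        omega

lemma FF_inj (n : ℕ) (hn : 4 ≤ n) : Function.Injective (FF n) := by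
  intro s s' h
  have hb : ∀ m, bv n (FF n s) m = bv n (FF n s') m := fun m => by rw [h]
  have hps : ∀ m, m + 3 ≤ n → ∑ j ∈ Finset.range (m+1), tsv n s j
      = ∑ j ∈ Finset.range (m+1), tsv n s' j := by
    intro m hm
    have := hb m
    rw [bv_FF_low n s m hm, bv_FF_low n s' m hm, Nat.cast_inj] at this
    exact this
  have hc : cv n s = cv n s' := by
    have h2 := hb (n-2)
    have h1 := hb (n-1)
    rw [bv_FF_n2 n hn s, bv_FF_n2 n hn s'] at h2
    rw [bv_FF_n1 n hn s, bv_FF_n1 n hn s'] at h1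
    omega
  have hts : ∀ m, m < n - 1 → tsv n s m = tsv n s' m := by
    intro m hm
    by_cases h0 : m + 3 ≤ n
    · rcases Nat.eq_zero_or_pos m with rfl | hpos
      · have := hps 0 h0
        simpa [Finset.sum_range_one] using this
      · have e1 := hps m h0
        have e2 := hps (m-1) (by omega)
        rw [show (m-1)+1 = m from by omega] at e2
        rw [Finset.sum_range_succ, Finset.sum_range_succ] at e1
        omega
    · have hm2 : m = n - 2 := by omega
      subst hm2
      have e := hps (n-3) (by omega)
      rw [show (n-3)+1 = n-2 from by omega] at e
      have c1 := cv_split n hn s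
      have c2 := cv_split n hn s'
      omega
  funext i
  have h2 := hts (i : ℕ) i.isLt
  simp only [tsv, dif_pos i.isLt, Fin.eta] at h2
  cases hb1 : s i <;> cases hb2 : s' i <;> simp_all

lemma FF_surj (n : ℕ) (hn : 4 ≤ n) (a : Fin n → ℤ) (ha : a ∈ ID n n) :
    ∃ s, FF n s = a := by
  obtain ⟨hpos, hy⟩ := (mem_ID_iff n hn a).1 ha
  refine ⟨fun i => decide (yv n a (i : ℕ) = 1), ?_⟩
  set s : Fin (n-1) → Bool := fun i => decide (yv n a (i : ℕ) = 1) with hs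
  have hts : ∀ m, m < n - 1 → ((tsv n s m : ℕ) : ℤ) = yv n a m := by
    intro m hm
    simp only [tsv, hs, dif_pos hm]
    rcases hy m (by omega) with h | h <;> simp [h]
  have hbv : ∀ (m : ℕ) (hm : m < n), (i : Fin n) → (i : ℕ) = m → a i = bv n a m := by
    intro m hm i him
    rw [bv, dif_pos hm]
    congr 1
    exact Fin.ext him
  have hpart : ∀ m, m + 3 ≤ n → ((∑ j ∈ Finset.range (m+1), tsv n s j : ℕ) : ℤ)
      = bv n a m := by
    intro m
    induction m with
    | zero =>
      intro h3
      rw [Finset.sum_range_one, hts 0 (by omega), yv_low n a 0 (by omega), gvv_succ]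
      simp [gvv]
    | succ m ih =>
      intro h3
      rw [Finset.sum_range_succ, Nat.cast_add, ih (by omega), hts (m+1) (by omega),
        yv_low n a (m+1) (by omega), gvv_succ, gvv_succ]
      ring
  have hcv : ((cv n s : ℕ) : ℤ) = 2 * bv n a (n-1) - yv n a (n-1) := by
    have : ((cv n s : ℕ) : ℤ) = ∑ m ∈ Finset.range (n-1), yv n a m := by
      rw [cv, Nat.cast_sum]
      exact Finset.sum_congr rfl fun m hm => hts m (Finset.mem_range.1 hm)
    rw [this]
    have hsplit : ∑ m ∈ Finset.range n, yv n a m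
        = ∑ m ∈ Finset.range (n-1), yv n a m + yv n a (n-1) := by
      have hr : Finset.range n = Finset.range ((n-1)+1) := by congr 1; omega
      rw [hr, Finset.sum_range_succ]
    have := ysum n hn a
    rw [hsplit] at this
    omega
  have hyn1 : yv n a (n-1) = bv n a (n-1) - bv n a (n-2) := yv_n1 n a hn
  have hy1 := hy (n-1) (by omega)
  funext i
  by_cases h3 : (i : ℕ) + 3 ≤ n
  · show (if (i : ℕ) + 3 ≤ n then _ else _) = a i
    rw [if_pos h3, hpart (i : ℕ) h3, hbv (i : ℕ) (by omega) i rfl]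
  · by_cases h2 : (i : ℕ) = n - 2
    · show (if (i : ℕ) + 3 ≤ n then _ else _) = a i
      rw [if_neg h3, if_pos h2, hbv (n-2) (by omega) i h2]
      omega
    · have h1 : (i : ℕ) = n - 1 := by have := i.isLt; omega
      show (if (i : ℕ) + 3 ≤ n then _ else _) = a i
      rw [if_neg h3, if_neg h2, hbv (n-1) (by omega) i h1]
      omega



/-- Lemma 3.7 for the spinor representation: in the `(Dₙ, Cₙ)` lattice, the
set `I` has cardinality `2^(n-1)`, the dimension of the half-spinor representation `S⁺`. -/
theorem stmt11 (n : ℕ) (hn : 4 ≤ n) :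
    (ID n n).ncard = 2 ^ (n - 1) := by
  have hrange : ID n n = Set.range (FF n) := by
    ext a
    constructor
    · intro ha
      exact FF_surj n hn a ha
    · rintro ⟨s, rfl⟩
      exact FF_mem n hn s
  rw [hrange, ← Set.image_univ, Set.ncard_image_of_injective _ (FF_inj n hn),
    Set.ncard_univ, Nat.card_eq_fintype_card]
  simp [Fintype.card_fun]
end

section
/- In the E_6 lattice with marking, the set I = { a ∈ ℤ^6 : a_i ≥ 0 for all i and ⟨l(a), l(a)⟩ = −1 } has cardinality 27. -/
/-- The Gram matrix of the marked `E₆` lattice: basis `C₀, C₁, …, C₆` (index `i : Fin 7`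
corresponds to `Cᵢ`), with `⟨C₀,C₀⟩ = -1`, `⟨Cᵢ,Cᵢ⟩ = -2` for `1 ≤ i ≤ 6`,
`⟨Cᵢ,Cᵢ₊₁⟩ = 1` for `1 ≤ i ≤ 4`, `⟨C₃,C₆⟩ = 1`, `⟨C₀,C₁⟩ = 1`, and all other
off-diagonal entries `0`. -/
def gramE6 (i j : Fin 7) : ℤ :=
  if i = j then (if (i : ℕ) = 0 then -1 else -2)
  else if (1 ≤ (i : ℕ) ∧ (j : ℕ) = (i : ℕ) + 1 ∧ (j : ℕ) ≤ 5)
      ∨ (1 ≤ (j : ℕ) ∧ (i : ℕ) = (j : ℕ) + 1 ∧ (i : ℕ) ≤ 5)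
      ∨ ((i : ℕ) = 3 ∧ (j : ℕ) = 6) ∨ ((j : ℕ) = 3 ∧ (i : ℕ) = 6)
      ∨ ((i : ℕ) = 0 ∧ (j : ℕ) = 1) ∨ ((j : ℕ) = 0 ∧ (i : ℕ) = 1) then 1
  else 0

/-- The class `l(a) = C₀ + ∑_{i=1}^6 aᵢ Cᵢ`, as a coordinate vector. -/
def lE6 (a : Fin 6 → ℤ) : Fin 7 → ℤ := Fin.cons 1 a

/-- The set `I` of coefficient tuples `a ∈ ℤ⁶` with all `aᵢ ≥ 0` and `⟨l(a), l(a)⟩ = -1`. -/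
def IE6 : Set (Fin 6 → ℤ) :=
  {a | (∀ i, 0 ≤ a i) ∧ qform gramE6 (lE6 a) (lE6 a) = -1}

lemma qform_eval' (a : Fin 6 → ℤ) :
    qform gramE6 (lE6 a) (lE6 a) =
      -1 + 2 * a 0 - 2*(a 0^2 + a 1^2 + a 2^2 + a 3^2 + a 4^2 + a 5^2)
        + 2*(a 0 * a 1 + a 1 * a 2 + a 2 * a 3 + a 3 * a 4 + a 2 * a 5) := by
  simp only [qform, Fin.sum_univ_succ, Finset.sum_empty, Fin.sum_univ_zero, lE6,
    Fin.cons_zero, Fin.cons_succ]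
  norm_num [gramE6, Fin.ext_iff, Fin.val_succ]
  simp only [show (Fin.succ 2 : Fin 6) = 3 from rfl, show ((Fin.succ 2).succ : Fin 6) = 4 from rfl,
    show ((Fin.succ 2).succ.succ : Fin 6) = 5 from rfl]
  ring

/-- Auxiliary finite enumeration set. -/
noncomputable def SE6' : Finset (Fin 6 → ℤ) :=
  (Finset.Icc 0 ![2,3,4,3,2,2]).filter
    (fun a => a 0^2 + a 1^2 + a 2^2 + a 3^2 + a 4^2 + a 5^2
      = a 0 + a 0 * a 1 + a 1 * a 2 + a 2 * a 3 + a 3 * a 4 + a 2 * a 5)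

lemma bounds' (a0 a1 a2 a3 a4 a5 : ℤ) (h0 : 0 ≤ a0) (h1 : 0 ≤ a1) (h2 : 0 ≤ a2)
    (h3 : 0 ≤ a3) (h4 : 0 ≤ a4) (h5 : 0 ≤ a5)
    (E : a0^2+a1^2+a2^2+a3^2+a4^2+a5^2 = a0 + a0*a1 + a1*a2 + a2*a3 + a3*a4 + a2*a5) :
    a0 ≤ 2 ∧ a1 ≤ 3 ∧ a2 ≤ 4 ∧ a3 ≤ 3 ∧ a4 ≤ 2 ∧ a5 ≤ 2 := by
  have b0 : a0 ≤ 2 := by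
    nlinarith [sq_nonneg (5*a0-4*a1), sq_nonneg (6*a1-5*a2), sq_nonneg (7*a2-6*a3-6*a5),
      sq_nonneg (8*a3-7*a4-6*a5), sq_nonneg (3*a4-2*a5)]
  refine ⟨b0, ?_, ?_, ?_, ?_, ?_⟩
  · nlinarith [sq_nonneg (2*a0-a1), sq_nonneg (6*a1-5*a2), sq_nonneg (7*a2-6*a3-6*a5),
      sq_nonneg (8*a3-7*a4-6*a5), sq_nonneg (3*a4-2*a5)]
  · nlinarith [sq_nonneg (2*a0-a1), sq_nonneg (3*a1-2*a2), sq_nonneg (7*a2-6*a3-6*a5),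
      sq_nonneg (8*a3-7*a4-6*a5), sq_nonneg (3*a4-2*a5)]
  · nlinarith [sq_nonneg (2*a0-a1), sq_nonneg (3*a1-2*a2), sq_nonneg (4*a2-3*a3-3*a5),
      sq_nonneg (19*a3-20*a4-15*a5), sq_nonneg (6*a4-5*a5)]
  · nlinarith [sq_nonneg (2*a0-a1), sq_nonneg (3*a1-2*a2), sq_nonneg (4*a2-3*a3-3*a5),
      sq_nonneg (5*a3-4*a4-3*a5), sq_nonneg (3*a4-4*a5)]
  · nlinarith [sq_nonneg (2*a0-a1), sq_nonneg (3*a1-2*a2), sq_nonneg (4*a2-3*a3-3*a5),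
      sq_nonneg (5*a3-4*a4-3*a5), sq_nonneg (2*a4-a5)]

set_option maxHeartbeats 4000000 in
set_option maxRecDepth 100000 in
lemma SE6'_card : SE6'.card = 27 := by decide

lemma IE6_eq_SE6' : IE6 = ↑SE6' := by
  ext a
  simp only [IE6, Set.mem_setOf_eq, SE6', Finset.coe_filter, Finset.mem_Icc]
  constructor
  · rintro ⟨hpos, hq⟩
    rw [qform_eval' a] at hq
    have E : a 0^2 + a 1^2 + a 2^2 + a 3^2 + a 4^2 + a 5^2
        = a 0 + a 0 * a 1 + a 1 * a 2 + a 2 * a 3 + a 3 * a 4 + a 2 * a 5 := by linarith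
    obtain ⟨b0, b1, b2, b3, b4, b5⟩ := bounds' (a 0) (a 1) (a 2) (a 3) (a 4) (a 5)
      (hpos 0) (hpos 1) (hpos 2) (hpos 3) (hpos 4) (hpos 5) E
    refine ⟨⟨fun i => hpos i, fun i => ?_⟩, E⟩
    fin_cases i <;> assumption
  · rintro ⟨⟨hlo, hhi⟩, E⟩
    refine ⟨fun i => hlo i, ?_⟩
    rw [qform_eval' a]
    linarith

/-- Lemma 3.7 for type `E₆`: in the marked `E₆` lattice, the set `I` has
cardinality `27`, the dimension of the standard representation of `E₆`. -/
theorem stmt13 : IE6.ncard = 27 := by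
  rw [IE6_eq_SE6', Set.ncard_coe_finset, SE6'_card]
end

section
/- In the E_6 lattice with marking, with K' := 3C_0 + 4C_1 + 5C_2 + 6C_3 + 4C_4 + 2C_5 + 3C_6: (i) for distinct a, a' ∈ I, ⟨l(a), l(a')⟩ ∈ {0, 1}; (ii) for each a ∈ I, exactly 10 elements a' ∈ I satisfy ⟨l(a), l(a')⟩ = 1 and exactly 16 elements a' ∈ I with a' ≠ a satisfy ⟨l(a), l(a')⟩ = 0; (iii) if a, a', a'' ∈ I satisfy l(a) + l(a') + l(a'') = K', then a, a', a'' are pairwise distinct and pairwise ⟨l(·), l(·)⟩ = 1; (iv) for each a ∈ I, the number of unordered pairs {a', a''} ⊆ I with l(a) + l(a') + l(a'') = K' is exactly 5. -/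
/-- `K' = 3C₀ + 4C₁ + 5C₂ + 6C₃ + 4C₄ + 2C₅ + 3C₆`, as a coordinate vector. -/
def KE6 : Fin 7 → ℤ := ![3, 4, 5, 6, 4, 2, 3]


/-! ### Auxiliary definitions and lemmas -/

/-- The 27 elements of `I`. -/
def S27 : Finset (Fin 6 → ℤ) := {![0,0,0,0,0,0], ![1,0,0,0,0,0], ![1,1,0,0,0,0], ![1,1,1,0,0,0], ![1,1,1,0,0,1], ![1,1,1,1,0,0], ![1,1,1,1,0,1], ![1,1,1,1,1,0], ![1,1,1,1,1,1], ![1,1,2,1,0,1], ![1,1,2,1,1,1], ![1,1,2,2,1,1], ![1,2,2,1,0,1], ![1,2,2,1,1,1], ![1,2,2,2,1,1], ![1,2,3,2,1,1], ![1,2,3,2,1,2], ![2,2,2,1,0,1], ![2,2,2,1,1,1], ![2,2,2,2,1,1], ![2,2,3,2,1,1], ![2,2,3,2,1,2], ![2,3,3,2,1,1], ![2,3,3,2,1,2], ![2,3,4,2,1,2], ![2,3,4,3,1,2], ![2,3,4,3,2,2]}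

/-- `K'` minus `3 C₀`, in coordinates `C₁, …, C₆`. -/
def k6 : Fin 6 → ℤ := ![4, 5, 6, 4, 2, 3]

/-- Explicit polynomial form of the pairing of two classes `l(a)`, `l(b)`. -/
def qI (a b : Fin 6 → ℤ) : ℤ :=
  -1 + a 0 + b 0
  - 2*(a 0*b 0 + a 1*b 1 + a 2*b 2 + a 3*b 3 + a 4*b 4 + a 5*b 5)
  + (a 0*b 1 + a 1*b 0) + (a 1*b 2 + a 2*b 1) + (a 2*b 3 + a 3*b 2)
  + (a 3*b 4 + a 4*b 3) + (a 2*b 5 + a 5*b 2)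

lemma lE6_app0 (a : Fin 6 → ℤ) : lE6 a 0 = 1 := rfl
lemma lE6_app1 (a : Fin 6 → ℤ) : lE6 a 1 = a 0 := rfl
lemma lE6_app2 (a : Fin 6 → ℤ) : lE6 a 2 = a 1 := rfl
lemma lE6_app3 (a : Fin 6 → ℤ) : lE6 a 3 = a 2 := rfl
lemma lE6_app4 (a : Fin 6 → ℤ) : lE6 a 4 = a 3 := rfl
lemma lE6_app5 (a : Fin 6 → ℤ) : lE6 a 5 = a 4 := rfl
lemma lE6_app6 (a : Fin 6 → ℤ) : lE6 a 6 = a 5 := rfl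

lemma qform_lE6 (a b : Fin 6 → ℤ) : qform gramE6 (lE6 a) (lE6 b) = qI a b := by
  simp only [qform, Fin.sum_univ_seven, lE6_app0, lE6_app1, lE6_app2, lE6_app3,
    lE6_app4, lE6_app5, lE6_app6]
  simp (config := { decide := true }) only [gramE6, if_true, if_false]
  unfold qI; ring

lemma KE6_succ : ∀ i : Fin 6, KE6 i.succ = k6 i := by decide

lemma sum_eq_KE6_iff (a b c : Fin 6 → ℤ) :
    lE6 a + lE6 b + lE6 c = KE6 ↔ a + b + c = k6 := by
  constructor
  · intro h
    funext i
    have h1 := congrFun h i.succ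
    simp only [Pi.add_apply, lE6, Fin.cons_succ, KE6_succ] at h1
    exact h1
  · intro h
    funext j
    induction j using Fin.cases with
    | zero => simp [Pi.add_apply, lE6, Fin.cons_zero]; rfl
    | succ i =>
      have h1 := congrFun h i
      simp only [Pi.add_apply, lE6, Fin.cons_succ, KE6_succ]
      exact h1

set_option maxHeartbeats 2000000 in
lemma natEnum :
    ∀ (i0 : Fin 3) (i1 : Fin 4) (i2 : Fin 5) (i3 : Fin 4) (i4 : Fin 3) (i5 : Fin 3),
    ((i0:ℕ) + ((i0:ℕ)*(i1:ℕ) + (i1:ℕ)*(i2:ℕ) + (i2:ℕ)*(i3:ℕ) + (i3:ℕ)*(i4:ℕ) + (i2:ℕ)*(i5:ℕ))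
      = (i0:ℕ)*(i0:ℕ) + (i1:ℕ)*(i1:ℕ) + (i2:ℕ)*(i2:ℕ) + (i3:ℕ)*(i3:ℕ) + (i4:ℕ)*(i4:ℕ) + (i5:ℕ)*(i5:ℕ)) →
    ((((i0:ℕ):ℤ)), (((i1:ℕ):ℤ)), (((i2:ℕ):ℤ)), (((i3:ℕ):ℤ)), (((i4:ℕ):ℤ)), (((i5:ℕ):ℤ))) ∈
      ([(0,0,0,0,0,0), (1,0,0,0,0,0), (1,1,0,0,0,0), (1,1,1,0,0,0), (1,1,1,0,0,1), (1,1,1,1,0,0), (1,1,1,1,0,1), (1,1,1,1,1,0), (1,1,1,1,1,1), (1,1,2,1,0,1), (1,1,2,1,1,1), (1,1,2,2,1,1), (1,2,2,1,0,1), (1,2,2,1,1,1), (1,2,2,2,1,1), (1,2,3,2,1,1), (1,2,3,2,1,2), (2,2,2,1,0,1), (2,2,2,1,1,1), (2,2,2,2,1,1), (2,2,3,2,1,1), (2,2,3,2,1,2), (2,3,3,2,1,1), (2,3,3,2,1,2), (2,3,4,2,1,2), (2,3,4,3,1,2), (2,3,4,3,2,2)] : List (ℤ × ℤ × ℤ ×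 ℤ × ℤ × ℤ)) := by decide

set_option maxHeartbeats 2000000 in
lemma mem_S27_of_mem_IE6 {a : Fin 6 → ℤ} (ha : a ∈ IE6) : a ∈ S27 := by
  obtain ⟨hpos, hq⟩ := ha
  rw [qform_lE6] at hq
  have h : a 0 + (a 0*a 1 + a 1*a 2 + a 2*a 3 + a 3*a 4 + a 2*a 5)
      = a 0*a 0 + a 1*a 1 + a 2*a 2 + a 3*a 3 + a 4*a 4 + a 5*a 5 := by
    unfold qI at hq; linarith
  set a0 := a 0; set a1 := a 1; set a2 := a 2; set a3 := a 3; set a4 := a 4; set a5 := a 5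
  have p0 := hpos 0; have p1 := hpos 1; have p2 := hpos 2
  have p3 := hpos 3; have p4 := hpos 4; have p5 := hpos 5
  have b0 : a0 < 3 := by
    nlinarith [sq_nonneg (5*a0-4*a1 : ℤ), sq_nonneg (6*a1-5*a2 : ℤ),
      sq_nonneg (7*a2-6*a3-6*a5 : ℤ), sq_nonneg (8*a3-7*a4-6*a5 : ℤ), sq_nonneg (3*a4-2*a5 : ℤ)]
  have b1 : a1 < 4 := by
    nlinarith [sq_nonneg (2*a0-1*a1-1 : ℤ), sq_nonneg (6*a1-5*a2 : ℤ),
      sq_nonneg (7*a2-6*a3-6*a5 : ℤ), sq_nonneg (8*a3-7*a4-6*a5 : ℤ), sq_nonneg (3*a4-2*a5 : ℤ)]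
  have b2 : a2 < 5 := by
    nlinarith [sq_nonneg (2*a0-1*a1-1 : ℤ), sq_nonneg (3*a1-2*a2-1 : ℤ),
      sq_nonneg (7*a2-6*a3-6*a5 : ℤ), sq_nonneg (8*a3-7*a4-6*a5 : ℤ), sq_nonneg (3*a4-2*a5 : ℤ)]
  have b3 : a3 < 4 := by
    nlinarith [sq_nonneg (2*a0-1*a1-1 : ℤ), sq_nonneg (3*a1-2*a2-1 : ℤ),
      sq_nonneg (4*a2-3*a3-3*a5-1 : ℤ), sq_nonneg (19*a3-20*a4-15*a5+3 : ℤ),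
      sq_nonneg (6*a4-5*a5+1 : ℤ)]
  have b4 : a4 < 3 := by
    nlinarith [sq_nonneg (2*a0-1*a1-1 : ℤ), sq_nonneg (3*a1-2*a2-1 : ℤ),
      sq_nonneg (4*a2-3*a3-3*a5-1 : ℤ), sq_nonneg (5*a3-4*a4-3*a5-1 : ℤ),
      sq_nonneg (3*a4-4*a5+2 : ℤ)]
  have b5 : a5 < 3 := by
    nlinarith [sq_nonneg (2*a0-1*a1-1 : ℤ), sq_nonneg (3*a1-2*a2-1 : ℤ),
      sq_nonneg (4*a2-3*a3-3*a5-1 : ℤ), sq_nonneg (5*a3-4*a4-3*a5-1 : ℤ),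
      sq_nonneg (6*a4-3*a5-1 : ℤ)]
  have e0 : ((a0.toNat : ℤ)) = a0 := Int.toNat_of_nonneg p0
  have e1 : ((a1.toNat : ℤ)) = a1 := Int.toNat_of_nonneg p1
  have e2 : ((a2.toNat : ℤ)) = a2 := Int.toNat_of_nonneg p2
  have e3 : ((a3.toNat : ℤ)) = a3 := Int.toNat_of_nonneg p3
  have e4 : ((a4.toNat : ℤ)) = a4 := Int.toNat_of_nonneg p4
  have e5 : ((a5.toNat : ℤ)) = a5 := Int.toNat_of_nonneg p5
  have hmem := natEnum ⟨a0.toNat, by omega⟩ ⟨a1.toNat, by omega⟩ ⟨a2.toNat, by omega⟩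
    ⟨a3.toNat, by omega⟩ ⟨a4.toNat, by omega⟩ ⟨a5.toNat, by omega⟩
    (by apply @Nat.cast_injective ℤ; push_cast; rw [e0, e1, e2, e3, e4, e5]; linarith)
  simp only [Fin.val_mk] at hmem
  rw [e0, e1, e2, e3, e4, e5] at hmem
  have ha : a = ![a0, a1, a2, a3, a4, a5] := funext fun i => by fin_cases i <;> rfl
  simp only [List.mem_cons, List.not_mem_nil, or_false, Prod.mk.injEq] at hmem
  rcases hmem with (h|h|h|h|h|h|h|h|h|h|h|h|h|h|h|h|h|h|h|h|h|h|h|h|h|h|h) <;> obtain ⟨q0, q1, q2, q3, q4, q5⟩ := h <;>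
    rw [ha, q0, q1, q2, q3, q4, q5] <;> decide

lemma mem_IE6_iff (a : Fin 6 → ℤ) : a ∈ IE6 ↔ a ∈ S27 := by
  constructor
  · exact mem_S27_of_mem_IE6
  · intro h
    have hk : (∀ i, 0 ≤ a i) ∧ qI a a = -1 := by
      revert h; revert a; decide
    exact ⟨hk.1, by rw [qform_lE6]; exact hk.2⟩

lemma check1 : ∀ a ∈ S27, ∀ b ∈ S27, a ≠ b → qI a b = 0 ∨ qI a b = 1 := by decide

lemma check2 : ∀ a ∈ S27, (S27.filter (fun b => qI a b = 1)).card = 10 := by decide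

lemma check3 : ∀ a ∈ S27, (S27.filter (fun b => b ≠ a ∧ qI a b = 0)).card = 16 := by decide

set_option maxHeartbeats 4000000 in
lemma check4 : ∀ a ∈ S27, ∀ b ∈ S27, ∀ c ∈ S27, a + b + c = k6 →
    (a ≠ b ∧ a ≠ c ∧ b ≠ c ∧ qI a b = 1 ∧ qI a c = 1 ∧ qI b c = 1) := by decide

/-- The finset of unordered pairs completing `a` to a triangle. -/
def Pairs (a : Fin 6 → ℤ) : Finset (Finset (Fin 6 → ℤ)) :=
  ((S27 ×ˢ S27).filter (fun p => a + p.1 + p.2 = k6)).image (fun p => {p.1, p.2})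

set_option maxHeartbeats 4000000 in
set_option maxRecDepth 100000 in
lemma check5 : ∀ a ∈ S27, (Pairs a).card = 5 := by decide

/-- in the marked `E₆` lattice with `K'` as above:
(i) `⟨l(a), l(a')⟩ ∈ {0,1}` for distinct `a, a' ∈ I`;
(ii) each `a ∈ I` has exactly `10` elements `a' ∈ I` with `⟨l(a), l(a')⟩ = 1` and exactly
`16` elements `a' ≠ a` with `⟨l(a), l(a')⟩ = 0`;
(iii) if `a, a', a'' ∈ I` satisfy `l(a) + l(a') + l(a'') = K'` then they are pairwise
distinct and pairwise `⟨·,·⟩ = 1`;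
(iv) for each `a ∈ I`, there are exactly `5` unordered pairs `{a', a''} ⊆ I` with
`l(a) + l(a') + l(a'') = K'`. -/
theorem stmt14 :
    (∀ a ∈ IE6, ∀ a' ∈ IE6, a ≠ a' →
      qform gramE6 (lE6 a) (lE6 a') ∈ ({0, 1} : Set ℤ))
    ∧ (∀ a ∈ IE6,
        {a' ∈ IE6 | qform gramE6 (lE6 a) (lE6 a') = 1}.ncard = 10
        ∧ {a' ∈ IE6 | a' ≠ a ∧ qform gramE6 (lE6 a) (lE6 a') = 0}.ncard = 16)
    ∧ (∀ a ∈ IE6, ∀ a' ∈ IE6, ∀ a'' ∈ IE6,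
        lE6 a + lE6 a' + lE6 a'' = KE6 →
          a ≠ a' ∧ a ≠ a'' ∧ a' ≠ a''
          ∧ qform gramE6 (lE6 a) (lE6 a') = 1
          ∧ qform gramE6 (lE6 a) (lE6 a'') = 1
          ∧ qform gramE6 (lE6 a') (lE6 a'') = 1)
    ∧ ∀ a ∈ IE6,
        {s : Finset (Fin 6 → ℤ) | ∃ a' ∈ IE6, ∃ a'' ∈ IE6,
          s = {a', a''} ∧ lE6 a + lE6 a' + lE6 a'' = KE6}.ncard = 5 := by
  have hIff := mem_IE6_iff
  refine ⟨?_, ?_, ?_, ?_⟩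
  · intro a ha b hb hne
    rw [qform_lE6]
    rcases check1 a ((hIff a).mp ha) b ((hIff b).mp hb) hne with h | h <;> simp [h]
  · intro a ha
    have haS := (hIff a).mp ha
    constructor
    · have hset : {a' ∈ IE6 | qform gramE6 (lE6 a) (lE6 a') = 1}
          = ↑(S27.filter (fun b => qI a b = 1)) := by
        ext b
        simp only [Set.mem_setOf_eq, Finset.coe_filter, hIff, qform_lE6, Finset.mem_coe,
          Finset.mem_filter]
      rw [hset, Set.ncard_coe_finset]
      exact check2 a haS
    · have hset : {a' ∈ IE6 | a' ≠ a ∧ qform gramE6 (lE6 a) (lE6 a') = 0}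
          = ↑(S27.filter (fun b => b ≠ a ∧ qI a b = 0)) := by
        ext b
        simp only [Set.mem_setOf_eq, Finset.coe_filter, hIff, qform_lE6, Finset.mem_coe,
          Finset.mem_filter]
      rw [hset, Set.ncard_coe_finset]
      exact check3 a haS
  · intro a ha b hb c hc hsum
    rw [qform_lE6, qform_lE6, qform_lE6]
    exact check4 a ((hIff a).mp ha) b ((hIff b).mp hb) c ((hIff c).mp hc)
      ((sum_eq_KE6_iff a b c).mp hsum)
  · intro a ha
    have haS := (hIff a).mp ha
    have hset : {s : Finset (Fin 6 → ℤ) | ∃ a' ∈ IE6, ∃ a'' ∈ IE6,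
        s = {a', a''} ∧ lE6 a + lE6 a' + lE6 a'' = KE6} = ↑(Pairs a) := by
      ext s
      constructor
      · rintro ⟨b, hb, c, hc, rfl, hs⟩
        exact Finset.mem_coe.mpr (Finset.mem_image.mpr ⟨(b, c), Finset.mem_filter.mpr
          ⟨Finset.mem_product.mpr ⟨(hIff b).mp hb, (hIff c).mp hc⟩,
            (sum_eq_KE6_iff a b c).mp hs⟩, rfl⟩)
      · intro hs
        obtain ⟨⟨b, c⟩, hbc, rfl⟩ := Finset.mem_image.mp (Finset.mem_coe.mp hs)
        obtain ⟨hprod, hsum⟩ := Finset.mem_filter.mp hbc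
        obtain ⟨hb, hc⟩ := Finset.mem_product.mp hprod
        exact ⟨b, (hIff b).mpr hb, c, (hIff c).mpr hc, rfl, (sum_eq_KE6_iff a b c).mpr hsum⟩
    rw [hset, Set.ncard_coe_finset]
    exact check5 a haS
end
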